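/- arXiv:2301.01846 — 7 statements merged into one kernel-verified Lean document; each statement's English description precedes it below -/
import Mathlib

section
/- Let ξ be a C² modulus on (0,∞) with ξ′>0 and A(t)=t²ξ²(t) satisfying A″>0. Define r(s) = √(ξ²(s)+2sξ(s)ξ′(s)) and, for t>0, the curve Γ^t(τ) = ((τ/t)r(τ), (τ/t)(r²(τ)+ξ²(τ))) for τ ≥ 0. Then the function τ ↦ Γ₂^t(τ) − (Γ₁^t(τ))² is strictly increasing on [0,t] and strictly decreasing on [t,∞), with maximum value ξ²(t) attained at τ = t. Its derivative equals (1/t²)A″(τ)(t−τ). -/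
open Filter

/-- Under the smooth setup, for fixed `t > 0` and the curve
`Γ^t(τ) = ((τ/t)r(τ), (τ/t)(r²(τ)+ξ²(τ)))`, the function `g(τ) = Γ₂^t(τ) − (Γ₁^t(τ))²`
is strictly increasing on `[0,t]`, strictly decreasing on `[t,∞)`, attains its maximum
`ξ²(t)` at `τ = t`, and has derivative `g′(τ) = (1/t²)A″(τ)(t−τ)` for `τ > 0`. -/
theorem statement6 (ξ ξ' A'' : ℝ → ℝ)
    (hsmooth : ContDiffOn ℝ 2 ξ (Set.Ioi 0))
    (hpos : ∀ t > 0, 0 < ξ t)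
    (hξ0 : Filter.Tendsto ξ (nhdsWithin 0 (Set.Ioi 0)) (nhds 0))
    (hderiv : ∀ t > 0, HasDerivAt ξ (ξ' t) t)
    (hξ'pos : ∀ t > 0, 0 < ξ' t)
    (hA'' : ∀ t > 0, HasDerivAt (deriv (fun t => t ^ 2 * ξ t ^ 2)) (A'' t) t)
    (hA''pos : ∀ t > 0, 0 < A'' t)
    (t : ℝ) (ht : 0 < t)
    (r : ℝ → ℝ) (hr : ∀ s, r s = Real.sqrt (ξ s ^ 2 + 2 * s * ξ s * ξ' s))
    (g : ℝ → ℝ) (hg : ∀ τ, g τ = (τ / t) * (r τ ^ 2 + ξ τ ^ 2) - ((τ / t) * r τ) ^ 2) :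
    StrictMonoOn g (Set.Icc 0 t) ∧
    StrictAntiOn g (Set.Ici t) ∧
    g t = ξ t ^ 2 ∧
    (∀ τ ∈ Set.Icc 0 t ∪ Set.Ici t, g τ ≤ ξ t ^ 2) ∧
    (∀ τ > 0, HasDerivAt g ((1 / t ^ 2) * A'' τ * (t - τ)) τ) := by
  set A : ℝ → ℝ := fun s => s ^ 2 * ξ s ^ 2 with hA
  set A' : ℝ → ℝ := deriv A with hA'
  have hAderiv : ∀ s > 0, HasDerivAt A (2 * s * ξ s ^ 2 + 2 * s ^ 2 * ξ s * ξ' s) s := by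
    intro s hs
    have h : HasDerivAt (fun x => x ^ 2 * ξ x ^ 2) _ s := (hasDerivAt_pow 2 s).mul ((hderiv s hs).pow 2)
    convert h using 1
    ring
  have hA'eq : ∀ s > 0, A' s = 2 * s * ξ s ^ 2 + 2 * s ^ 2 * ξ s * ξ' s :=
    fun s hs => (hAderiv s hs).deriv
  have hA'At : ∀ s > 0, HasDerivAt A (A' s) s := fun s hs => (hA'eq s hs) ▸ hAderiv s hs
  have hr2 : ∀ s > 0, r s ^ 2 = ξ s ^ 2 + 2 * s * ξ s * ξ' s := by
    intro s hs
    have h1 : 0 < 2 * s * ξ s * ξ' s :=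
      mul_pos (mul_pos (mul_pos two_pos hs) (hpos s hs)) (hξ'pos s hs)
    rw [hr]
    exact Real.sq_sqrt (by nlinarith [sq_nonneg (ξ s)])
  have hgeq : ∀ τ > 0, g τ = (1 / t ^ 2) * ((t - τ) * A' τ + A τ) := by
    intro τ hτ
    have h2 := hr2 τ hτ
    have h3 : ((τ / t) * r τ) ^ 2 = (τ / t) ^ 2 * (ξ τ ^ 2 + 2 * τ * ξ τ * ξ' τ) := by
      rw [mul_pow, h2]
    rw [hg, h3, h2, hA'eq τ hτ]
    simp only [hA]
    field_simp
    ring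
  have hgderiv : ∀ τ > 0, HasDerivAt g ((1 / t ^ 2) * A'' τ * (t - τ)) τ := by
    intro τ hτ
    have h1 : HasDerivAt (fun x : ℝ => t - x) (-1) τ := by
      simpa using (hasDerivAt_id τ).const_sub t
    have h2 : HasDerivAt A' (A'' τ) τ := hA'' τ hτ
    have h3 := hA'At τ hτ
    have hh : HasDerivAt (fun x => (1 / t ^ 2) * ((t - x) * A' x + A x)) _ τ := ((h1.mul h2).add h3).const_mul (1 / t ^ 2)
    have hh' : HasDerivAt (fun x => (1 / t ^ 2) * ((t - x) * A' x + A x))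
        ((1 / t ^ 2) * A'' τ * (t - τ)) τ := by
      convert hh using 1
      ring
    apply hh'.congr_of_eventuallyEq
    filter_upwards [isOpen_Ioi.mem_nhds hτ] with x hx
    exact hgeq x hx
  have hg0 : g 0 = 0 := by rw [hg]; simp
  have hgpos : ∀ τ, 0 < τ → τ ≤ t → 0 < g τ := by
    intro τ hτ hτt
    rw [hgeq τ hτ, hA'eq τ hτ]
    have h1 : 0 < ξ τ := hpos τ hτ
    have h2 : 0 < ξ' τ := hξ'pos τ hτ
    have hAτ : (0:ℝ) < A τ := by simp only [hA]; positivity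
    have hA'τ : 0 < 2 * τ * ξ τ ^ 2 + 2 * τ ^ 2 * ξ τ * ξ' τ := by positivity
    have ht2 : (0:ℝ) < 1 / t ^ 2 := by positivity
    have h4 : 0 ≤ (t - τ) * (2 * τ * ξ τ ^ 2 + 2 * τ ^ 2 * ξ τ * ξ' τ) :=
      mul_nonneg (by linarith) hA'τ.le
    exact mul_pos ht2 (by linarith)
  have hmono : StrictMonoOn g (Set.Icc 0 t) := by
    intro x hx y hy hxy
    rcases eq_or_lt_of_le hx.1 with h0 | h0
    · rw [← h0, hg0]
      exact hgpos y (h0 ▸ hxy) hy.2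
    · have hsm : StrictMonoOn g (Set.Icc x t) := by
        apply strictMonoOn_of_deriv_pos (convex_Icc x t)
        · intro z hz
          exact (hgderiv z (lt_of_lt_of_le h0 hz.1)).continuousAt.continuousWithinAt
        · intro z hz
          rw [interior_Icc] at hz
          have hz0 : 0 < z := h0.trans hz.1
          rw [(hgderiv z hz0).deriv]
          have := hA''pos z hz0
          have h2 : 0 < t - z := sub_pos.mpr hz.2
          positivity
      exact hsm ⟨le_refl x, hx.2⟩ ⟨hxy.le, hy.2⟩ hxy
  have hanti : StrictAntiOn g (Set.Ici t) := by
    apply strictAntiOn_of_deriv_neg (convex_Ici t)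
    · intro z hz
      exact (hgderiv z (ht.trans_le hz)).continuousAt.continuousWithinAt
    · intro z hz
      rw [interior_Ici] at hz
      have hz0 : 0 < z := ht.trans hz
      rw [(hgderiv z hz0).deriv]
      have h1 := hA''pos z hz0
      have h2 : t - z < 0 := sub_neg.mpr hz
      have ht2 : (0:ℝ) < 1 / t ^ 2 := by positivity
      exact mul_neg_of_pos_of_neg (mul_pos ht2 h1) h2
  have hgt : g t = ξ t ^ 2 := by
    rw [hg, div_self ht.ne']
    ring
  refine ⟨hmono, hanti, hgt, ?_, hgderiv⟩
  intro τ hτ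
  rw [← hgt]
  rcases hτ with hτ | hτ
  · exact hmono.monotoneOn hτ ⟨ht.le, le_refl t⟩ hτ.2
  · exact hanti.antitoneOn (Set.self_mem_Ici) hτ hτ
end

section
/- Let ξ be a C² modulus with ξ′>0 and A(t)=t²ξ²(t) satisfying A″>0; let r and Γ^t be as in the standard construction. For any t>0, the curve Γ^t(τ) = ((τ/t)r(τ), (τ/t)(r²(τ)+ξ²(τ))), τ≥0, lies on or below the parabola x₂ = x₁² + ξ²(t), touching it exactly at the point where x₁ = r(t) (i.e., at τ = t), which is the unique common point. -/
open Filter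

/-- Under the smooth setup, for any `t > 0` the curve
`Γ^t(τ) = ((τ/t)r(τ), (τ/t)(r²(τ)+ξ²(τ)))`, `τ ≥ 0`, lies on or below the parabola
`x₂ = x₁² + ξ²(t)`, touching it exactly at `τ = t` (where `x₁ = r(t)`), its unique common
point with the parabola. -/
theorem statement8 (ξ ξ' A'' : ℝ → ℝ)
    (hsmooth : ContDiffOn ℝ 2 ξ (Set.Ioi 0))
    (hpos : ∀ t > 0, 0 < ξ t)
    (hξ0 : Filter.Tendsto ξ (nhdsWithin 0 (Set.Ioi 0)) (nhds 0))
    (hderiv : ∀ t > 0, HasDerivAt ξ (ξ' t) t)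
    (hξ'pos : ∀ t > 0, 0 < ξ' t)
    (hA'' : ∀ t > 0, HasDerivAt (deriv (fun t => t ^ 2 * ξ t ^ 2)) (A'' t) t)
    (hA''pos : ∀ t > 0, 0 < A'' t)
    (r : ℝ → ℝ) (hr : ∀ s, r s = Real.sqrt (ξ s ^ 2 + 2 * s * ξ s * ξ' s))
    (t : ℝ) (ht : 0 < t) :
    (∀ τ ≥ (0 : ℝ),
      (τ / t) * (r τ ^ 2 + ξ τ ^ 2) ≤ ((τ / t) * r τ) ^ 2 + ξ t ^ 2) ∧
    (∀ τ ≥ (0 : ℝ),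
      ((τ / t) * (r τ ^ 2 + ξ τ ^ 2) = ((τ / t) * r τ) ^ 2 + ξ t ^ 2 ↔ τ = t)) ∧
    (t / t) * r t = r t := by
  have hAd : ∀ s > (0:ℝ), HasDerivAt (fun s => s ^ 2 * ξ s ^ 2)
      (2 * s * ξ s ^ 2 + 2 * s ^ 2 * ξ s * ξ' s) s := by
    intro s hs
    have h1 : HasDerivAt (fun x : ℝ => x ^ 2) (2 * s) s := by
      simpa using hasDerivAt_pow 2 s
    have h2 : HasDerivAt (fun x => ξ x ^ 2) (2 * ξ s * ξ' s) s := by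
      simpa [mul_comm, mul_assoc, mul_left_comm] using (hderiv s hs).fun_pow 2
    have := h1.fun_mul h2
    refine this.congr_deriv ?_
    ring
  have hd_eq : ∀ s > (0:ℝ), deriv (fun s => s ^ 2 * ξ s ^ 2) s
      = 2 * s * ξ s ^ 2 + 2 * s ^ 2 * ξ s * ξ' s :=
    fun s hs => (hAd s hs).deriv
  have hmono : StrictMonoOn (deriv (fun s => s ^ 2 * ξ s ^ 2)) (Set.Ioi 0) := by
    apply strictMonoOn_of_deriv_pos (convex_Ioi 0)
    · intro x hx
      exact ((hA'' x hx).continuousAt).continuousWithinAt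
    · intro x hx
      rw [interior_Ioi] at hx
      rw [(hA'' x hx).deriv]
      exact hA''pos x hx
  -- tangent line inequality for the strictly convex A
  have htan : ∀ τ > (0:ℝ), τ ≠ t →
      τ ^ 2 * ξ τ ^ 2 + (2 * τ * ξ τ ^ 2 + 2 * τ ^ 2 * ξ τ * ξ' τ) * (t - τ)
        < t ^ 2 * ξ t ^ 2 := by
    intro τ hτ hne
    have hcont : ∀ a b : ℝ, 0 < a → ContinuousOn (fun s => s ^ 2 * ξ s ^ 2) (Set.Icc a b) := by
      intro a b ha x hx
      exact ((hAd x (lt_of_lt_of_le ha hx.1)).continuousAt).continuousWithinAt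
    rcases lt_or_gt_of_ne hne with h | h
    · obtain ⟨c, hc, hceq⟩ := exists_hasDerivAt_eq_slope (fun s => s ^ 2 * ξ s ^ 2)
        (deriv (fun s => s ^ 2 * ξ s ^ 2)) h (hcont τ t hτ)
        (fun x hx => by
          have hx0 : 0 < x := lt_trans hτ hx.1
          rw [hd_eq x hx0]; exact hAd x hx0)
      have hc0 : 0 < c := lt_trans hτ hc.1
      have hlt : deriv (fun s => s ^ 2 * ξ s ^ 2) τ < deriv (fun s => s ^ 2 * ξ s ^ 2) c :=
        hmono hτ hc0 hc.1
      rw [hd_eq τ hτ] at hlt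
      have hts : 0 < t - τ := by linarith
      rw [hceq] at hlt
      have h5 := (lt_div_iff₀ hts).mp hlt
      nlinarith [h5]
    · obtain ⟨c, hc, hceq⟩ := exists_hasDerivAt_eq_slope (fun s => s ^ 2 * ξ s ^ 2)
        (deriv (fun s => s ^ 2 * ξ s ^ 2)) h (hcont t τ ht)
        (fun x hx => by
          have hx0 : 0 < x := lt_trans ht hx.1
          rw [hd_eq x hx0]; exact hAd x hx0)
      have hc0 : 0 < c := lt_trans ht hc.1
      have hlt : deriv (fun s => s ^ 2 * ξ s ^ 2) c < deriv (fun s => s ^ 2 * ξ s ^ 2) τ :=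
        hmono hc0 hτ hc.2
      rw [hd_eq τ hτ] at hlt
      have hts : 0 < τ - t := by linarith
      rw [hceq] at hlt
      have h5 := (div_lt_iff₀ hts).mp hlt
      nlinarith [h5]
  have hr2 : ∀ τ > (0:ℝ), r τ ^ 2 = ξ τ ^ 2 + 2 * τ * ξ τ * ξ' τ := by
    intro τ hτ
    rw [hr]
    refine Real.sq_sqrt ?_
    have hp : 0 < 2 * τ * ξ τ * ξ' τ :=
      mul_pos (mul_pos (mul_pos two_pos hτ) (hpos τ hτ)) (hξ'pos τ hτ)
    nlinarith [hp, sq_nonneg (ξ τ)]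
  -- strict inequality for positive τ ≠ t
  have key : ∀ τ > (0:ℝ), τ ≠ t →
      (τ / t) * (r τ ^ 2 + ξ τ ^ 2) < ((τ / t) * r τ) ^ 2 + ξ t ^ 2 := by
    intro τ hτ hne
    have h := htan τ hτ hne
    have ht2 : (0:ℝ) < t ^ 2 := by positivity
    have hmain : t ^ 2 * ((τ / t) * (r τ ^ 2 + ξ τ ^ 2))
        < t ^ 2 * (((τ / t) * r τ) ^ 2 + ξ t ^ 2) := by
      have e1 : t ^ 2 * ((τ / t) * (r τ ^ 2 + ξ τ ^ 2)) = t * τ * (r τ ^ 2 + ξ τ ^ 2) := by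
        field_simp
      have e2 : t ^ 2 * (((τ / t) * r τ) ^ 2 + ξ t ^ 2)
          = τ ^ 2 * r τ ^ 2 + t ^ 2 * ξ t ^ 2 := by
        field_simp
      rw [e1, e2, hr2 τ hτ]
      nlinarith [h]
    exact lt_of_mul_lt_mul_left hmain (le_of_lt ht2)
  -- equality at τ = t
  have heqt : (t / t) * (r t ^ 2 + ξ t ^ 2) = ((t / t) * r t) ^ 2 + ξ t ^ 2 := by
    rw [div_self ht.ne']
    ring
  refine ⟨?_, ?_, by rw [div_self ht.ne', one_mul]⟩
  · intro τ hτ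
    rcases eq_or_lt_of_le hτ with h0 | h0
    · rw [← h0]
      simp
      positivity
    · rcases eq_or_ne τ t with rfl | hne
      · exact le_of_eq heqt
      · exact le_of_lt (key τ h0 hne)
  · intro τ hτ
    constructor
    · intro heq
      by_contra hne
      rcases eq_or_lt_of_le hτ with h0 | h0
      · rw [← h0] at heq
        simp at heq
        nlinarith [hpos t ht, heq]
      · exact (ne_of_lt (key τ h0 hne)) heq
    · rintro rfl
      exact heqt
end

section
/- Under the standard smooth setup (ξ C², ξ′>0, A″>0, with r and curves Γ^t defined as usual), if 0 < t₁ < t₂, then the curve Γ^{t₁} lies below the curve Γ^{t₂} in the following sense: for each τ > 0, the point Γ^{t₂}(τ) = (t₁/t₂)·Γ^{t₁}(τ) lies on the segment joining Γ^{t₁}(τ) to the origin, and this segment lies above the curve Γ^{t₁} (since Γ₁^{t₁} is increasing and the slope Γ₂^{t₁}/Γ₁^{t₁} is increasing along the curve). -/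
open Filter

section Aux

lemma key_lemma (ξ ξ' A'' : ℝ → ℝ)
    (hpos : ∀ t > 0, 0 < ξ t)
    (hderiv : ∀ t > 0, HasDerivAt ξ (ξ' t) t)
    (hξ'pos : ∀ t > 0, 0 < ξ' t)
    (hA'' : ∀ t > 0, HasDerivAt (deriv (fun t => t ^ 2 * ξ t ^ 2)) (A'' t) t)
    (hA''pos : ∀ t > 0, 0 < A'' t)
    (r : ℝ → ℝ) (hr : ∀ s, r s = Real.sqrt (ξ s ^ 2 + 2 * s * ξ s * ξ' s))
    (t₁ : ℝ) (ht₁ : 0 < t₁) :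
    ∀ τ > (0:ℝ), ∀ θ ∈ Set.Icc (0:ℝ) 1, ∀ σ ≥ (0:ℝ),
      θ * ((τ / t₁) * r τ) = (σ / t₁) * r σ →
      (σ / t₁) * (r σ ^ 2 + ξ σ ^ 2) ≤ θ * ((τ / t₁) * (r τ ^ 2 + ξ τ ^ 2)) := by
  set A : ℝ → ℝ := fun t => t ^ 2 * ξ t ^ 2 with hA
  set G : ℝ → ℝ := deriv A with hGdef
  -- basic facts about r
  have hargpos : ∀ s > (0:ℝ), 0 < ξ s ^ 2 + 2 * s * ξ s * ξ' s := by
    intro s hs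
    have h1 := hpos s hs
    have h2 := hξ'pos s hs
    positivity
  have hr2 : ∀ s > (0:ℝ), r s ^ 2 = ξ s ^ 2 + 2 * s * ξ s * ξ' s := by
    intro s hs
    rw [hr]
    exact Real.sq_sqrt (hargpos s hs).le
  have hrpos : ∀ s > (0:ℝ), 0 < r s := by
    intro s hs
    rw [hr]
    exact Real.sqrt_pos.mpr (hargpos s hs)
  -- derivative of A
  have hAd : ∀ s > (0:ℝ), HasDerivAt A (2 * s * ξ s ^ 2 + 2 * s ^ 2 * ξ s * ξ' s) s := by
    intro s hs
    have h1 : HasDerivAt (fun t : ℝ => t ^ 2) (2 * s) s := by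
      simpa using hasDerivAt_pow 2 s
    have h2 : HasDerivAt (fun t => ξ t ^ 2) (2 * ξ s * ξ' s) s := by
      simpa [mul_comm] using (hderiv s hs).fun_pow 2
    have := h1.fun_mul h2
    refine this.congr_deriv ?_
    ring
  have hG : ∀ s > (0:ℝ), G s = 2 * s * ξ s ^ 2 + 2 * s ^ 2 * ξ s * ξ' s := by
    intro s hs
    exact (hAd s hs).deriv
  have hGpos : ∀ s > (0:ℝ), 0 < G s := by
    intro s hs
    rw [hG s hs]
    have h1 := hpos s hs
    have h2 := hξ'pos s hs
    positivity
  -- F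
  set F : ℝ → ℝ := fun s => s * G s - A s with hFdef
  have hFval : ∀ s > (0:ℝ), F s = s ^ 2 * ξ s ^ 2 + 2 * s ^ 3 * ξ s * ξ' s := by
    intro s hs
    simp only [hFdef, hA, hG s hs]
    ring
  have hFpos : ∀ s > (0:ℝ), 0 < F s := by
    intro s hs
    rw [hFval s hs]
    have h1 := hpos s hs
    have h2 := hξ'pos s hs
    positivity
  have hFsq : ∀ s > (0:ℝ), F s = (s * r s) ^ 2 := by
    intro s hs
    rw [hFval s hs, mul_pow, hr2 s hs]
    ring
  have hFd : ∀ s > (0:ℝ), HasDerivAt F (s * A'' s) s := by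
    intro s hs
    have h1 : HasDerivAt (fun x => x * G x) (1 * G s + s * A'' s) s :=
      (hasDerivAt_id s).mul (hA'' s hs)
    have h2 : HasDerivAt A (G s) s := by
      rw [hG s hs]; exact hAd s hs
    have := h1.fun_sub h2
    refine this.congr_deriv ?_
    ring
  have hFmono : StrictMonoOn F (Set.Ioi 0) := by
    apply strictMonoOn_of_deriv_pos (convex_Ioi 0)
    · intro s hs
      exact ((hFd s hs).continuousAt).continuousWithinAt
    · intro s hs
      rw [interior_Ioi] at hs
      rw [(hFd s hs).deriv]
      exact mul_pos hs (hA''pos s hs)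
  -- H
  set H : ℝ → ℝ := fun s => G s ^ 2 / F s with hHdef
  have hHd : ∀ s > (0:ℝ), HasDerivAt H
      (((2 * G s ^ 1 * A'' s) * F s - G s ^ 2 * (s * A'' s)) / F s ^ 2) s := by
    intro s hs
    exact ((hA'' s hs).pow 2).div (hFd s hs) (hFpos s hs).ne'
  have hHd_pos : ∀ s > (0:ℝ),
      0 < ((2 * G s ^ 1 * A'' s) * F s - G s ^ 2 * (s * A'' s)) / F s ^ 2 := by
    intro s hs
    apply div_pos
    · have hnum : (2 * G s ^ 1 * A'' s) * F s - G s ^ 2 * (s * A'' s)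
          = A'' s * (2 * s * ξ s ^ 2 + 2 * s ^ 2 * ξ s * ξ' s) * (2 * s ^ 3 * ξ s * ξ' s) := by
        rw [hG s hs, hFval s hs]
        ring
      rw [hnum]
      have h1 := hpos s hs
      have h2 := hξ'pos s hs
      have h3 := hA''pos s hs
      positivity
    · exact pow_pos (hFpos s hs) 2
  have hHmono : StrictMonoOn H (Set.Ioi 0) := by
    apply strictMonoOn_of_deriv_pos (convex_Ioi 0)
    · intro s hs
      exact ((hHd s hs).continuousAt).continuousWithinAt
    · intro s hs
      rw [interior_Ioi] at hs
      rw [(hHd s hs).deriv]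
      exact hHd_pos s hs
  -- main argument
  intro τ hτ θ hθ σ hσ heq
  obtain ⟨hθ0, hθ1⟩ := hθ
  rcases eq_or_lt_of_le hσ with hσ0 | hσpos
  · -- σ = 0
    rw [← hσ0]
    have h1 := hrpos τ hτ
    have h2 := hpos τ hτ
    have : (0:ℝ) ≤ θ * ((τ / t₁) * (r τ ^ 2 + ξ τ ^ 2)) := by positivity
    simpa using this
  · -- σ > 0
    have hrτ := hrpos τ hτ
    have hrσ := hrpos σ hσpos
    have key0 : θ * (τ * r τ) = σ * r σ := by
      have h := congrArg (fun x => x * t₁) heq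
      field_simp at h
      linarith
    have hθpos : 0 < θ := by
      rcases lt_or_eq_of_le hθ0 with h | h
      · exact h
      · exfalso
        rw [← h] at key0
        simp at key0
        rcases key0 with h' | h'
        · exact hσpos.ne' h'
        · exact hrσ.ne' h'
    have hFστ : F σ = θ ^ 2 * F τ := by
      rw [hFsq σ hσpos, hFsq τ hτ, ← key0]
      ring
    have hFle : F σ ≤ F τ := by
      have hFτ := hFpos τ hτ
      nlinarith [mul_nonneg (mul_nonneg (sub_nonneg.2 hθ1) (by linarith : (0:ℝ) ≤ 1 + θ)) hFτ.le]
    have hστ : σ ≤ τ := by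
      by_contra hc
      push_neg at hc
      have := hFmono (Set.mem_Ioi.mpr hτ) (Set.mem_Ioi.mpr hσpos) hc
      linarith
    have hHle : H σ ≤ H τ :=
      hHmono.monotoneOn (Set.mem_Ioi.mpr hσpos) (Set.mem_Ioi.mpr hτ) hστ
    have hcross : G σ ^ 2 * F τ ≤ G τ ^ 2 * F σ := by
      have := (div_le_div_iff₀ (hFpos σ hσpos) (hFpos τ hτ)).mp hHle
      linarith
    have hGsq : G σ ^ 2 ≤ θ ^ 2 * G τ ^ 2 := by
      have hFτ := hFpos τ hτ
      rw [hFστ] at hcross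
      nlinarith
    have hGle : G σ ≤ θ * G τ := by
      have h1 := hGpos σ hσpos
      have h2 := hGpos τ hτ
      nlinarith [mul_pos hθpos h2]
    have e1 : (σ / t₁) * (r σ ^ 2 + ξ σ ^ 2) = (1 / t₁) * G σ := by
      rw [hr2 σ hσpos, hG σ hσpos]
      ring
    have e2 : θ * ((τ / t₁) * (r τ ^ 2 + ξ τ ^ 2)) = (1 / t₁) * (θ * G τ) := by
      rw [hr2 τ hτ, hG τ hτ]
      ring
    rw [e1, e2]
    exact mul_le_mul_of_nonneg_left hGle (by positivity)

end Aux


/-- Under the smooth setup, if `0 < t₁ < t₂`, the curve `Γ^{t₁}` lies below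
`Γ^{t₂}`: for every `τ > 0`, the point `Γ^{t₂}(τ)` equals `(t₁/t₂)·Γ^{t₁}(τ)`, hence lies on
the segment joining `Γ^{t₁}(τ)` to the origin, and every point of that segment lies on or
above the curve `Γ^{t₁}` (with respect to matching first coordinates); in particular any
point of `Γ^{t₁}` having the same first coordinate as `Γ^{t₂}(τ)` lies below it. -/
theorem statement9 (ξ ξ' A'' : ℝ → ℝ)
    (hsmooth : ContDiffOn ℝ 2 ξ (Set.Ioi 0))
    (hpos : ∀ t > 0, 0 < ξ t)
    (hξ0 : Filter.Tendsto ξ (nhdsWithin 0 (Set.Ioi 0)) (nhds 0))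
    (hderiv : ∀ t > 0, HasDerivAt ξ (ξ' t) t)
    (hξ'pos : ∀ t > 0, 0 < ξ' t)
    (hA'' : ∀ t > 0, HasDerivAt (deriv (fun t => t ^ 2 * ξ t ^ 2)) (A'' t) t)
    (hA''pos : ∀ t > 0, 0 < A'' t)
    (r : ℝ → ℝ) (hr : ∀ s, r s = Real.sqrt (ξ s ^ 2 + 2 * s * ξ s * ξ' s))
    (Γ : ℝ → ℝ → ℝ × ℝ)
    (hΓ : ∀ t τ, Γ t τ = ((τ / t) * r τ, (τ / t) * (r τ ^ 2 + ξ τ ^ 2)))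
    (t₁ t₂ : ℝ) (ht₁ : 0 < t₁) (ht₁₂ : t₁ < t₂) :
    ∀ τ > (0 : ℝ),
      Γ t₂ τ = (t₁ / t₂) • Γ t₁ τ ∧
      (∀ θ ∈ Set.Icc (0 : ℝ) 1, ∀ σ ≥ (0 : ℝ),
        θ * (Γ t₁ τ).1 = (Γ t₁ σ).1 → (Γ t₁ σ).2 ≤ θ * (Γ t₁ τ).2) ∧
      (∀ σ ≥ (0 : ℝ), (Γ t₂ τ).1 = (Γ t₁ σ).1 → (Γ t₁ σ).2 ≤ (Γ t₂ τ).2) := by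
  have ht₂ : 0 < t₂ := ht₁.trans ht₁₂
  have hk := key_lemma ξ ξ' A'' hpos hderiv hξ'pos hA'' hA''pos r hr t₁ ht₁
  intro τ hτ
  have hfst2 : (Γ t₂ τ).1 = (t₁ / t₂) * (Γ t₁ τ).1 := by
    rw [hΓ, hΓ]
    field_simp
  have hsnd2 : (Γ t₂ τ).2 = (t₁ / t₂) * (Γ t₁ τ).2 := by
    rw [hΓ, hΓ]
    field_simp
  have hkey : ∀ θ ∈ Set.Icc (0 : ℝ) 1, ∀ σ ≥ (0 : ℝ),
      θ * (Γ t₁ τ).1 = (Γ t₁ σ).1 → (Γ t₁ σ).2 ≤ θ * (Γ t₁ τ).2 := by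
    intro θ hθ σ hσ h
    have h' : θ * (τ / t₁ * r τ) = σ / t₁ * r σ := by
      rw [hΓ t₁ τ, hΓ t₁ σ] at h
      exact h
    have h2 := hk τ hτ θ hθ σ hσ h'
    rw [hΓ t₁ σ, hΓ t₁ τ]
    exact h2
  refine ⟨?_, hkey, ?_⟩
  · have : Γ t₂ τ = ((Γ t₂ τ).1, (Γ t₂ τ).2) := rfl
    rw [this, hfst2, hsnd2]
    rw [Prod.smul_def]
    simp [smul_eq_mul]
  · intro σ hσ h
    have hmem : t₁ / t₂ ∈ Set.Icc (0 : ℝ) 1 :=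
      ⟨by positivity, (div_le_one ht₂).mpr ht₁₂.le⟩
    have := hkey (t₁ / t₂) hmem σ hσ (by rw [← hfst2]; exact h)
    rw [hsnd2]
    exact this
end

section
/- Under the standard smooth setup, fix t > 0 and let Ω^t = {(x₁,x₂) ∈ ℝ²: x₁² ≤ x₂ ≤ x₁² + ξ²(t)} and let γ^t be the curve Γ^t restricted to τ ∈ [0,t]. For every point (y₁,y₂) ∈ Ω^t there exist unique τ = 𝒯(y₁,y₂,t) ∈ [0,t] and u = U(y₁,y₂,t) ∈ ℝ such that y₁ = u + γ₁^t(τ) and y₂ = u² + 2u·γ₁^t(τ) + γ₂^t(τ). Moreover, for any c ∈ ℝ: 𝒯(y₁+c, y₂+2cy₁+c², t) = 𝒯(y₁,y₂,t) and U(y₁+c, y₂+2cy₁+c², t) = U(y₁,y₂,t)+c. -/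
open Filter

/-- Under the smooth setup, fix `t > 0` and let
`γ^t(τ) = ((τ/t)r(τ), (τ/t)(r²(τ)+ξ²(τ)))`, `τ ∈ [0,t]`. For every point `(y₁,y₂)` in the
parabolic strip `Ω^t = {x₁² ≤ x₂ ≤ x₁² + ξ²(t)}` there exist unique `τ ∈ [0,t]` and `u ∈ ℝ`
with `y₁ = u + γ₁^t(τ)` and `y₂ = u² + 2uγ₁^t(τ) + γ₂^t(τ)`. Moreover, under the parabolic
shift `(y₁,y₂) ↦ (y₁+c, y₂+2cy₁+c²)`, the parameter `τ` is unchanged and `u` becomes `u+c`. -/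
theorem statement10 (ξ ξ' A'' : ℝ → ℝ)
    (hsmooth : ContDiffOn ℝ 2 ξ (Set.Ioi 0))
    (hpos : ∀ t > 0, 0 < ξ t)
    (hξ0 : Filter.Tendsto ξ (nhdsWithin 0 (Set.Ioi 0)) (nhds 0))
    (hderiv : ∀ t > 0, HasDerivAt ξ (ξ' t) t)
    (hξ'pos : ∀ t > 0, 0 < ξ' t)
    (hA'' : ∀ t > 0, HasDerivAt (deriv (fun t => t ^ 2 * ξ t ^ 2)) (A'' t) t)
    (hA''pos : ∀ t > 0, 0 < A'' t)
    (γ₁ γ₂ : ℝ → ℝ)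
    (t : ℝ) (ht : 0 < t)
    (hγ1 : ∀ τ, γ₁ τ = (τ / t) * Real.sqrt (ξ τ ^ 2 + 2 * τ * ξ τ * ξ' τ))
    (hγ2 : ∀ τ, γ₂ τ =
      (τ / t) * ((Real.sqrt (ξ τ ^ 2 + 2 * τ * ξ τ * ξ' τ)) ^ 2 + ξ τ ^ 2)) :
    ∀ y₁ y₂ : ℝ, y₁ ^ 2 ≤ y₂ → y₂ ≤ y₁ ^ 2 + ξ t ^ 2 →
      (∃! p : ℝ × ℝ, p.1 ∈ Set.Icc (0 : ℝ) t ∧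
        y₁ = p.2 + γ₁ p.1 ∧ y₂ = p.2 ^ 2 + 2 * p.2 * γ₁ p.1 + γ₂ p.1) ∧
      (∀ c τ u τ' u' : ℝ, τ ∈ Set.Icc (0 : ℝ) t → τ' ∈ Set.Icc (0 : ℝ) t →
        (y₁ = u + γ₁ τ ∧ y₂ = u ^ 2 + 2 * u * γ₁ τ + γ₂ τ) →
        (y₁ + c = u' + γ₁ τ' ∧
          y₂ + 2 * c * y₁ + c ^ 2 = u' ^ 2 + 2 * u' * γ₁ τ' + γ₂ τ') →
        τ' = τ ∧ u' = u + c) := by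
  classical
  have htne : t ≠ 0 := ne_of_gt ht
  set A : ℝ → ℝ := fun s => s ^ 2 * ξ s ^ 2 with hAdef
  set B : ℝ → ℝ := deriv (fun s => s ^ 2 * ξ s ^ 2) with hBdef
  have hBderiv : ∀ τ > 0, HasDerivAt B (A'' τ) τ := by
    intro τ hτ
    exact hA'' τ hτ
  have hAderiv' : ∀ τ > 0,
      HasDerivAt A (2 * τ * ξ τ ^ 2 + 2 * τ ^ 2 * (ξ τ * ξ' τ)) τ := by
    intro τ hτ
    have h1 : HasDerivAt (fun s : ℝ => s ^ 2) (2 * τ) τ := by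
      simpa using hasDerivAt_pow 2 τ
    have h2 : HasDerivAt (fun s => ξ s ^ 2) (2 * ξ τ * ξ' τ) τ := by
      simpa using (hderiv τ hτ).fun_pow 2
    have h3 := h1.fun_mul h2
    rw [hAdef]
    refine h3.congr_deriv ?_
    ring
  have hBeq : ∀ τ > 0, B τ = 2 * τ * ξ τ ^ 2 + 2 * τ ^ 2 * (ξ τ * ξ' τ) := by
    intro τ hτ
    have := (hAderiv' τ hτ).deriv
    rw [hAdef] at this
    rw [hBdef]
    exact this
  have hABderiv : ∀ τ > 0, HasDerivAt A (B τ) τ := by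
    intro τ hτ
    rw [hBeq τ hτ]
    exact hAderiv' τ hτ
  have hBpos : ∀ τ > 0, 0 < B τ := by
    intro τ hτ
    have hx := hpos τ hτ
    have hx' := hξ'pos τ hτ
    rw [hBeq τ hτ]
    have h1 : 0 < 2 * τ * ξ τ ^ 2 := by
      have := pow_pos hx 2; nlinarith
    have h2 : 0 < 2 * τ ^ 2 * (ξ τ * ξ' τ) := by
      have := pow_pos hτ 2; have := mul_pos hx hx'; nlinarith
    linarith
  have hBmono : StrictMonoOn B (Set.Ioi 0) := by
    apply strictMonoOn_of_deriv_pos (convex_Ioi 0)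
    · intro τ hτ
      exact (hBderiv τ hτ).continuousAt.continuousWithinAt
    · intro τ hτ
      rw [interior_Ioi] at hτ
      rw [(hBderiv τ hτ).deriv]
      exact hA''pos τ hτ
  have hApos : ∀ τ > 0, 0 < A τ := by
    intro τ hτ
    rw [hAdef]
    exact mul_pos (pow_pos hτ 2) (pow_pos (hpos τ hτ) 2)
  have hAnonneg : ∀ τ : ℝ, 0 ≤ A τ := by
    intro τ; rw [hAdef]; positivity
  have hA0 : Tendsto A (nhdsWithin 0 (Set.Ioi 0)) (nhds 0) := by
    have h1 : Tendsto (fun s : ℝ => s ^ 2) (nhdsWithin 0 (Set.Ioi 0)) (nhds 0) := by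
      have := ((continuous_pow 2).tendsto (0 : ℝ)).mono_left
        (nhdsWithin_le_nhds (s := Set.Ioi (0 : ℝ)))
      simpa using this
    have h2 : Tendsto (fun s => ξ s ^ 2) (nhdsWithin 0 (Set.Ioi 0)) (nhds 0) := by
      simpa using hξ0.pow 2
    have h3 := h1.mul h2
    rw [hAdef]
    simpa using h3
  have hB0 : Tendsto B (nhdsWithin 0 (Set.Ioi 0)) (nhds 0) := by
    rw [tendsto_order]
    constructor
    · intro a ha
      filter_upwards [self_mem_nhdsWithin] with σ hσ
      exact lt_trans ha (hBpos σ hσ)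
    · intro a ha
      have hsm : Tendsto (fun s : ℝ => 2 * s * ξ s ^ 2) (nhdsWithin 0 (Set.Ioi 0)) (nhds 0) := by
        have h1 : Tendsto (fun s : ℝ => 2 * s) (nhdsWithin 0 (Set.Ioi 0)) (nhds 0) := by
          have hc : Continuous fun s : ℝ => 2 * s := continuous_const.mul continuous_id
          have := (hc.tendsto (0 : ℝ)).mono_left
            (nhdsWithin_le_nhds (s := Set.Ioi (0 : ℝ)))
          simpa using this
        have h2 : Tendsto (fun s => ξ s ^ 2) (nhdsWithin 0 (Set.Ioi 0)) (nhds 0) := by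
          simpa using hξ0.pow 2
        simpa using h1.mul h2
      obtain ⟨τ0, hτ0a, hτ0pos⟩ :=
        ((hsm.eventually_lt_const ha).and self_mem_nhdsWithin).exists
      have hτ0 : (0 : ℝ) < τ0 := hτ0pos
      filter_upwards [show Set.Ioo (0 : ℝ) (τ0 / 2) ∈ nhdsWithin 0 (Set.Ioi 0) from
        Ioo_mem_nhdsGT_of_mem (Set.mem_Ico.2 ⟨le_refl (0 : ℝ), by linarith⟩)] with σ hσ
      obtain ⟨hσ0, hσlt⟩ := hσ
      have hστ : σ < τ0 := by linarith
      obtain ⟨c, hc, hceq⟩ := exists_hasDerivAt_eq_slope A B hστ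
        (fun x hx => (hABderiv x (lt_of_lt_of_le hσ0 hx.1)).continuousAt.continuousWithinAt)
        (fun x hx => hABderiv x (lt_trans hσ0 hx.1))
      have hcmul : B c * (τ0 - σ) = A τ0 - A σ := by
        rw [hceq]
        exact div_mul_cancel₀ _ (by linarith)
      have hlt : B σ < B c :=
        hBmono (Set.mem_Ioi.2 hσ0) (Set.mem_Ioi.2 (lt_trans hσ0 hc.1)) hc.1
      have hAσ : 0 ≤ A σ := hAnonneg σ
      have hAτ0 : A τ0 = τ0 ^ 2 * ξ τ0 ^ 2 := by rw [hAdef]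
      have hBσ := hBpos σ hσ0
      have h5 : B σ * (τ0 - σ) < B c * (τ0 - σ) :=
        mul_lt_mul_of_pos_right hlt (by linarith)
      have h6 : B σ * (τ0 / 2) ≤ B σ * (τ0 - σ) :=
        mul_le_mul_of_nonneg_left (by linarith) hBσ.le
      have h8 : τ0 ^ 2 * ξ τ0 ^ 2 = (τ0 / 2) * (2 * τ0 * ξ τ0 ^ 2) := by ring
      have h9 : (τ0 / 2) * (2 * τ0 * ξ τ0 ^ 2) < (τ0 / 2) * a :=
        mul_lt_mul_of_pos_left hτ0a (by linarith)
      have h7 : B σ * (τ0 / 2) < a * (τ0 / 2) := by linarith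
      nlinarith [h7, hτ0]
  have hr2 : ∀ τ > 0,
      Real.sqrt (ξ τ ^ 2 + 2 * τ * ξ τ * ξ' τ) ^ 2 = ξ τ ^ 2 + 2 * τ * ξ τ * ξ' τ := by
    intro τ hτ
    apply Real.sq_sqrt
    have h1 := mul_pos (mul_pos (mul_pos two_pos hτ) (hpos τ hτ)) (hξ'pos τ hτ)
    nlinarith [sq_nonneg (ξ τ)]
  set g : ℝ → ℝ := fun τ => γ₂ τ - γ₁ τ ^ 2 with hgdef
  have hgf : ∀ τ > 0, g τ = ((t - τ) * B τ + A τ) / t ^ 2 := by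
    intro τ hτ
    simp only [hgdef]
    rw [hγ1 τ, hγ2 τ, mul_pow, hr2 τ hτ, hBeq τ hτ]
    simp only [hAdef]
    field_simp
    ring
  have hg0 : g 0 = 0 := by
    simp [hgdef, hγ1, hγ2]
  have hgt : g t = ξ t ^ 2 := by
    rw [hgf t ht]
    simp only [sub_self, zero_mul, zero_add, hAdef]
    field_simp
  have hgpos : ∀ τ, 0 < τ → τ ≤ t → 0 < g τ := by
    intro τ h1 h2
    rw [hgf τ h1]
    apply div_pos _ (pow_pos ht 2)
    have hA := hApos τ h1
    have : 0 ≤ (t - τ) * B τ := mul_nonneg (by linarith) (hBpos τ h1).le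
    linarith
  have hHderiv : ∀ τ, 0 < τ →
      HasDerivAt (fun s => (t - s) * B s + A s) ((t - τ) * A'' τ) τ := by
    intro τ hτ
    have h1 : HasDerivAt (fun s : ℝ => t - s) (-1) τ := by
      simpa using (hasDerivAt_id τ).const_sub t
    have h2 := (h1.fun_mul (hBderiv τ hτ)).fun_add (hABderiv τ hτ)
    refine h2.congr_deriv ?_
    ring
  have hHmono : StrictMonoOn (fun s => (t - s) * B s + A s) (Set.Ioc 0 t) := by
    apply strictMonoOn_of_deriv_pos (convex_Ioc 0 t)
    · intro τ hτ
      exact (hHderiv τ hτ.1).continuousAt.continuousWithinAt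
    · intro τ hτ
      rw [interior_Ioc] at hτ
      rw [(hHderiv τ hτ.1).deriv]
      exact mul_pos (by linarith [hτ.2]) (hA''pos τ hτ.1)
  have hgmonoIoc : StrictMonoOn g (Set.Ioc 0 t) := by
    intro a ha b hb hab
    rw [hgf a ha.1, hgf b hb.1]
    have h := hHmono ha hb hab
    have ht2 : (0 : ℝ) < t ^ 2 := pow_pos ht 2
    exact (div_lt_div_iff_of_pos_right ht2).2 h
  have hgmono : StrictMonoOn g (Set.Icc 0 t) := by
    intro a ha b hb hab
    rcases eq_or_lt_of_le ha.1 with h0 | h0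
    · rw [← h0] at hab ⊢
      rw [hg0]
      exact hgpos b hab hb.2
    · exact hgmonoIoc ⟨h0, ha.2⟩ ⟨lt_trans h0 hab, hb.2⟩ hab
  have hginj := hgmono.injOn
  have hgten : Tendsto g (nhdsWithin 0 (Set.Ioi 0)) (nhds 0) := by
    have h1 : Tendsto (fun s : ℝ => t - s) (nhdsWithin 0 (Set.Ioi 0)) (nhds t) := by
      have hc : Continuous fun s : ℝ => t - s := continuous_const.sub continuous_id
      have := (hc.tendsto (0 : ℝ)).mono_left
        (nhdsWithin_le_nhds (s := Set.Ioi (0 : ℝ)))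
      simpa using this
    have h2 := (h1.mul hB0).add hA0
    have h3 := h2.div_const (t ^ 2)
    have h4 : Tendsto (fun s => ((t - s) * B s + A s) / t ^ 2)
        (nhdsWithin 0 (Set.Ioi 0)) (nhds 0) := by
      simpa using h3
    apply h4.congr'
    filter_upwards [self_mem_nhdsWithin] with σ hσ
    exact (hgf σ hσ).symm
  have hsurj : ∀ v, 0 ≤ v → v ≤ ξ t ^ 2 → ∃ τ, τ ∈ Set.Icc (0 : ℝ) t ∧ g τ = v := by
    intro v hv0 hvt
    rcases eq_or_lt_of_le hv0 with h | h
    · exact ⟨0, ⟨le_refl 0, ht.le⟩, by rw [hg0, ← h]⟩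
    · obtain ⟨σ, hσv, hσmem⟩ := ((hgten.eventually_lt_const h).and
        (Ioo_mem_nhdsGT_of_mem (Set.mem_Ico.2 ⟨le_refl (0 : ℝ), ht⟩))).exists
      obtain ⟨hσ0, hσt⟩ := hσmem
      have hcontH : ContinuousOn (fun s => (t - s) * B s + A s) (Set.Icc σ t) :=
        fun x hx => (hHderiv x (lt_of_lt_of_le hσ0 hx.1)).continuousAt.continuousWithinAt
      have hcont : ContinuousOn g (Set.Icc σ t) :=
        (hcontH.div_const (t ^ 2)).congr
          (fun x hx => hgf x (lt_of_lt_of_le hσ0 hx.1))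
      have hsub := intermediate_value_Icc (le_of_lt hσt) hcont
      have hv : v ∈ Set.Icc (g σ) (g t) := ⟨hσv.le, by rw [hgt]; exact hvt⟩
      obtain ⟨τ, hτmem, hτv⟩ := hsub hv
      exact ⟨τ, ⟨le_trans hσ0.le hτmem.1, hτmem.2⟩, hτv⟩
  have key : ∀ z₁ z₂ τ u : ℝ, z₁ = u + γ₁ τ → z₂ = u ^ 2 + 2 * u * γ₁ τ + γ₂ τ →
      g τ = z₂ - z₁ ^ 2 := by
    intro z₁ z₂ τ u h1 h2
    simp only [hgdef]
    linear_combination (z₁ + u + γ₁ τ) * h1 - h2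
  intro y₁ y₂ hy1 hy2
  obtain ⟨τ₀, hτ₀mem, hτ₀⟩ := hsurj (y₂ - y₁ ^ 2) (by linarith) (by linarith)
  have hτ₀' : γ₂ τ₀ - γ₁ τ₀ ^ 2 = y₂ - y₁ ^ 2 := by
    simpa [hgdef] using hτ₀
  constructor
  · refine ⟨(τ₀, y₁ - γ₁ τ₀), ⟨hτ₀mem, by ring, by linear_combination -hτ₀'⟩, ?_⟩
    rintro ⟨τ', u'⟩ ⟨hmem', he1, he2⟩
    have h := key y₁ y₂ τ' u' he1 he2
    have hττ : τ' = τ₀ := hginj hmem' hτ₀mem (by rw [h, hτ₀])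
    have hu : u' = y₁ - γ₁ τ' := by linarith [he1]
    simp only [Prod.mk.injEq]
    exact ⟨hττ, by rw [hu, hττ]⟩
  · rintro c τ u τ' u' hmem hmem' ⟨e1, e2⟩ ⟨e3, e4⟩
    have h1 := key y₁ y₂ τ u e1 e2
    have h2 := key (y₁ + c) (y₂ + 2 * c * y₁ + c ^ 2) τ' u' e3 e4
    have hττ : τ' = τ := hginj hmem' hmem (by rw [h1, h2]; ring)
    refine ⟨hττ, ?_⟩
    rw [hττ] at e3
    linarith [e1, e3]
end

section
/- Under the standard smooth setup, for any a ∈ ℝ, t > 0, any point x = (x₁,x₂) in Ω^t_a := {x ∈ Ω^t : U(x,t) ≥ a}, and any s ∈ (0,t), the point y = (a,a²) + (t/s)(x − (a,a²)) satisfies y₂ ≤ y₁² + ξ²(s). -/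
open Filter

/-- Tangent line of a function with strictly monotone derivative lies below the graph
(on the positive half-line). -/
lemma tangent_le_aux (f : ℝ → ℝ) (hf : ∀ x > 0, HasDerivAt f (deriv f x) x)
    (hmono : StrictMonoOn (deriv f) (Set.Ioi 0)) (p q : ℝ) (hp : 0 < p) (hq : 0 < q) :
    f p + deriv f p * (q - p) ≤ f q := by
  have hcont : ∀ x y : ℝ, 0 < x → ContinuousOn f (Set.Icc x y) := by
    intro x y hx
    exact fun z hz => ((hf z (lt_of_lt_of_le hx hz.1)).continuousAt).continuousWithinAt
  rcases lt_trichotomy p q with h | h | h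
  · obtain ⟨c, hc, hceq⟩ := exists_hasDerivAt_eq_slope f (deriv f) h (hcont p q hp)
      (fun z hz => hf z (lt_trans hp hz.1))
    have hlt : deriv f p < deriv f c := hmono (Set.mem_Ioi.2 hp)
      (Set.mem_Ioi.2 (lt_trans hp hc.1)) hc.1
    rw [hceq] at hlt
    have hqp : 0 < q - p := by linarith
    nlinarith [mul_lt_mul_of_pos_right hlt hqp, div_mul_cancel₀ (f q - f p) (ne_of_gt hqp)]
  · simp [h]
  · obtain ⟨c, hc, hceq⟩ := exists_hasDerivAt_eq_slope f (deriv f) h (hcont q p hq)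
      (fun z hz => hf z (lt_trans hq hz.1))
    have hlt : deriv f c < deriv f p := hmono (Set.mem_Ioi.2 (lt_trans hq hc.1))
      (Set.mem_Ioi.2 hp) hc.2
    rw [hceq] at hlt
    have hpq : 0 < p - q := by linarith
    nlinarith [mul_lt_mul_of_pos_right hlt hpq, div_mul_cancel₀ (f p - f q) (ne_of_gt hpq)]

/-- Under the smooth setup, for `a ∈ ℝ`, `t > 0`, a point `x = (x₁,x₂)` of the
strip `Ω^t` with `U(x,t) ≥ a` (i.e. `x` decomposes as `x₁ = u + γ₁^t(τ)`,
`x₂ = u² + 2uγ₁^t(τ) + γ₂^t(τ)` with `τ ∈ [0,t]` and `u ≥ a`), and any `s ∈ (0,t)`, the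
dilated point `y = (a,a²) + (t/s)(x − (a,a²))` satisfies `y₂ ≤ y₁² + ξ²(s)`. -/
theorem statement11 (ξ ξ' A'' : ℝ → ℝ)
    (hsmooth : ContDiffOn ℝ 2 ξ (Set.Ioi 0))
    (hpos : ∀ t > 0, 0 < ξ t)
    (hξ0 : Filter.Tendsto ξ (nhdsWithin 0 (Set.Ioi 0)) (nhds 0))
    (hderiv : ∀ t > 0, HasDerivAt ξ (ξ' t) t)
    (hξ'pos : ∀ t > 0, 0 < ξ' t)
    (hA'' : ∀ t > 0, HasDerivAt (deriv (fun t => t ^ 2 * ξ t ^ 2)) (A'' t) t)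
    (hA''pos : ∀ t > 0, 0 < A'' t)
    (r : ℝ → ℝ) (hr : ∀ s, r s = Real.sqrt (ξ s ^ 2 + 2 * s * ξ s * ξ' s))
    (a t : ℝ) (ht : 0 < t)
    (x₁ x₂ : ℝ)
    (hΩ : x₁ ^ 2 ≤ x₂ ∧ x₂ ≤ x₁ ^ 2 + ξ t ^ 2)
    (hU : ∃ τ ∈ Set.Icc (0 : ℝ) t, ∃ u : ℝ, a ≤ u ∧
      x₁ = u + (τ / t) * r τ ∧
      x₂ = u ^ 2 + 2 * u * ((τ / t) * r τ) + (τ / t) * (r τ ^ 2 + ξ τ ^ 2))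
    (s : ℝ) (hs : s ∈ Set.Ioo 0 t) :
    a ^ 2 + (t / s) * (x₂ - a ^ 2) ≤ (a + (t / s) * (x₁ - a)) ^ 2 + ξ s ^ 2 := by
  obtain ⟨τ, hτ, u, hu, hx1, hx2⟩ := hU
  obtain ⟨hs0, hst⟩ := hs
  set Af : ℝ → ℝ := fun t => t ^ 2 * ξ t ^ 2 with hAf
  have hA' : ∀ p > 0, HasDerivAt Af (2 * p * ξ p ^ 2 + 2 * p ^ 2 * ξ p * ξ' p) p := by
    intro p hp
    have h1 : HasDerivAt (fun x : ℝ => x ^ 2) (2 * p) p := by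
      simpa using (hasDerivAt_pow 2 p)
    have h2 : HasDerivAt (fun x : ℝ => ξ x ^ 2) (2 * ξ p * ξ' p) p := by
      have := ((hderiv p hp).fun_pow 2)
      simpa [mul_comm, mul_assoc, mul_left_comm] using this
    have := h1.fun_mul h2
    exact this.congr_deriv (by ring)
  have hA'val : ∀ p > 0, deriv Af p = 2 * p * ξ p ^ 2 + 2 * p ^ 2 * ξ p * ξ' p :=
    fun p hp => (hA' p hp).deriv
  have hAfderiv : ∀ x > 0, HasDerivAt Af (deriv Af x) x := by
    intro x hx; rw [hA'val x hx]; exact hA' x hx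
  have hmono : StrictMonoOn (deriv Af) (Set.Ioi 0) := by
    apply strictMonoOn_of_deriv_pos (convex_Ioi 0)
    · intro z hz
      exact ((hA'' z hz).differentiableAt.continuousAt).continuousWithinAt
    · intro z hz
      rw [interior_Ioi] at hz
      rw [(hA'' z hz).deriv]
      exact hA''pos z hz
  -- the key inequality
  have hc0 : 0 ≤ (τ / t) * r τ := by
    apply mul_nonneg (div_nonneg hτ.1 ht.le)
    rw [hr]; exact Real.sqrt_nonneg _
  have key : (t / s) * ((τ / t) * (r τ ^ 2 + ξ τ ^ 2)) -
      (t / s) ^ 2 * ((τ / t) * r τ) ^ 2 ≤ ξ s ^ 2 := by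
    rcases eq_or_lt_of_le hτ.1 with hτ0 | hτ0
    · rw [← hτ0]
      simpa using sq_nonneg (ξ s)
    · -- τ > 0 : use convexity of Af
      have htan := tangent_le_aux Af hAfderiv hmono τ s hτ0 hs0
      rw [hA'val τ hτ0] at htan
      have hrsq : r τ ^ 2 = ξ τ ^ 2 + 2 * τ * ξ τ * ξ' τ := by
        rw [hr]
        apply Real.sq_sqrt
        nlinarith [mul_pos (mul_pos hτ0 (hpos τ hτ0)) (hξ'pos τ hτ0), sq_nonneg (ξ τ)]
      have hAs : Af s = s ^ 2 * ξ s ^ 2 := rfl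
      have hAτ : Af τ = τ ^ 2 * ξ τ ^ 2 := rfl
      rw [hAs, hAτ] at htan
      have hexp : t / s * (τ / t * (r τ ^ 2 + ξ τ ^ 2)) - (t / s) ^ 2 * (τ / t * r τ) ^ 2
          = (τ * s * (r τ ^ 2 + ξ τ ^ 2) - τ ^ 2 * r τ ^ 2) / s ^ 2 := by
        field_simp
      rw [hexp, div_le_iff₀ (by positivity), hrsq]
      nlinarith [htan]
  -- final algebra
  have hl1 : 1 ≤ t / s := (one_le_div hs0).2 hst.le
  have hl0 : 0 < t / s := div_pos ht hs0
  have hv : 0 ≤ u - a := by linarith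
  have hnn : 0 ≤ (t / s) * ((t / s) - 1) * ((u - a) ^ 2 + 2 * (u - a) * ((τ / t) * r τ)) := by
    apply mul_nonneg (mul_nonneg hl0.le (by linarith))
    have := mul_nonneg hv hc0
    nlinarith
  have hid : (a + (t / s) * (x₁ - a)) ^ 2 + ξ s ^ 2 - (a ^ 2 + (t / s) * (x₂ - a ^ 2))
      = (t / s) * ((t / s) - 1) * ((u - a) ^ 2 + 2 * (u - a) * ((τ / t) * r τ))
        + (ξ s ^ 2 - ((t / s) * ((τ / t) * (r τ ^ 2 + ξ τ ^ 2))
            - (t / s) ^ 2 * ((τ / t) * r τ) ^ 2)) := by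
    rw [hx1, hx2]; ring
  linarith [hid, hnn, key]
end

section
/- Let ξ be a modulus on [0,T] (continuous, increasing, ξ(0)=0) and let t₀ ∈ (0,T]. Then for every δ > 0 there exists a continuous increasing function ξ̃ on [0,T] such that ξ̃ ≥ ξ on [0,T], ξ̃(0) = 0, ξ̃(t₀) ≤ ξ(t₀) + δ, and the function t ↦ t·ξ̃(t) is convex on [0,T]. -/
noncomputable def nazS (ξ : ℝ → ℝ) (t₀ ε : ℝ) (t : ℝ) : ℝ :=
  ⨆ s : Set.Icc (0:ℝ) t₀, ξ s.1 * ((1+ε)*t - ε*s.1)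

noncomputable def nazh (ξ : ℝ → ℝ) (t₀ ε A C : ℝ) (t : ℝ) : ℝ :=
  max (nazS ξ t₀ ε t) (max (A + C*(t - t₀)) 0)

private lemma convexOn_max13 {f g : ℝ → ℝ} (hf : ConvexOn ℝ Set.univ f)
    (hg : ConvexOn ℝ Set.univ g) : ConvexOn ℝ Set.univ (fun t => max (f t) (g t)) := by
  refine ⟨convex_univ, fun x _ y _ a b ha hb hab => ?_⟩
  have h1 := hf.2 (Set.mem_univ x) (Set.mem_univ y) ha hb hab
  have h2 := hg.2 (Set.mem_univ x) (Set.mem_univ y) ha hb hab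
  simp only [smul_eq_mul] at *
  refine max_le ?_ ?_
  · exact h1.trans (add_le_add (mul_le_mul_of_nonneg_left (le_max_left _ _) ha)
      (mul_le_mul_of_nonneg_left (le_max_left _ _) hb))
  · exact h2.trans (add_le_add (mul_le_mul_of_nonneg_left (le_max_right _ _) ha)
      (mul_le_mul_of_nonneg_left (le_max_right _ _) hb))

private lemma convexOn_affine13 (A C t₀ : ℝ) :
    ConvexOn ℝ Set.univ (fun t => A + C*(t - t₀)) := by
  refine ⟨convex_univ, fun x _ y _ a b ha hb hab => ?_⟩
  simp only [smul_eq_mul]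
  refine le_of_eq ?_
  linear_combination (C*t₀ - A) * hab

set_option maxHeartbeats 2000000 in
/-- (Nazarov's majorization lemma.) Let `ξ` be a modulus on `[0,T]`
(continuous, increasing, `ξ(0)=0`) and `t₀ ∈ (0,T]`. For every `δ > 0` there is a
continuous increasing function `ξ̃` on `[0,T]` with `ξ̃ ≥ ξ` on `[0,T]`, `ξ̃(0) = 0`,
`ξ̃(t₀) ≤ ξ(t₀) + δ`, and `t ↦ t·ξ̃(t)` convex on `[0,T]`. -/
theorem statement13 (T : ℝ) (hT : 0 < T) (ξ : ℝ → ℝ)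
    (hcont : ContinuousOn ξ (Set.Icc 0 T))
    (hmono : MonotoneOn ξ (Set.Icc 0 T))
    (hξ0 : ξ 0 = 0)
    (t₀ : ℝ) (ht₀ : t₀ ∈ Set.Ioc 0 T)
    (δ : ℝ) (hδ : 0 < δ) :
    ∃ ξt : ℝ → ℝ,
      ContinuousOn ξt (Set.Icc 0 T) ∧
      MonotoneOn ξt (Set.Icc 0 T) ∧
      (∀ t ∈ Set.Icc (0 : ℝ) T, ξ t ≤ ξt t) ∧
      ξt 0 = 0 ∧
      ξt t₀ ≤ ξ t₀ + δ ∧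
      ConvexOn ℝ (Set.Icc 0 T) (fun t => t * ξt t) := by
  obtain ⟨ht₀pos, ht₀T⟩ := ht₀
  have h0T : (0:ℝ) ∈ Set.Icc (0:ℝ) T := ⟨le_refl _, hT.le⟩
  have ht₀mem : t₀ ∈ Set.Icc (0:ℝ) T := ⟨ht₀pos.le, ht₀T⟩
  have hTmem : T ∈ Set.Icc (0:ℝ) T := ⟨hT.le, le_refl _⟩
  have hξnn : ∀ t ∈ Set.Icc (0:ℝ) T, 0 ≤ ξ t := fun t ht => by
    have := hmono h0T ht ht.1; linarith
  have hω₀nn : 0 ≤ ξ t₀ := hξnn t₀ ht₀mem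
  haveI : Nonempty (Set.Icc (0:ℝ) t₀) := ⟨⟨0, le_refl _, ht₀pos.le⟩⟩
  -- ε
  obtain ⟨ε, hεdef⟩ : ∃ x : ℝ, x = δ / (2*(ξ t₀+1)) := ⟨_, rfl⟩
  have hεpos : 0 < ε := by rw [hεdef]; positivity
  have hεω₀ : ε * ξ t₀ ≤ δ/2 := by
    have h1 : ε * (ξ t₀ + 1) = δ/2 := by rw [hεdef]; field_simp
    nlinarith
  -- η from continuity at t₀
  obtain ⟨η, hηpos, hη⟩ : ∃ η > 0, ∀ t ∈ Set.Icc (0:ℝ) T, |t - t₀| < η → ξ t ≤ ξ t₀ + δ/2 := by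
    have hc := hcont t₀ ht₀mem
    rw [Metric.continuousWithinAt_iff] at hc
    obtain ⟨η, hηpos, hη⟩ := hc (δ/2) (by positivity)
    refine ⟨η, hηpos, fun t ht hdist => ?_⟩
    have := hη ht (by simpa [Real.dist_eq] using hdist)
    rw [Real.dist_eq] at this
    have := abs_lt.mp this
    linarith [this.2]
  -- constants
  obtain ⟨A, hAdef⟩ : ∃ x : ℝ, x = t₀ * (ξ t₀ + δ/2) := ⟨_, rfl⟩
  obtain ⟨C, hCdef⟩ : ∃ x : ℝ, x = (ξ t₀ + δ/2 + 1) + (T * ξ T)/η := ⟨_, rfl⟩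
  have hξTnn : 0 ≤ ξ T := hξnn T hTmem
  have hdivnn : 0 ≤ (T * ξ T)/η := by positivity
  have hCpos : 0 < C := by rw [hCdef]; nlinarith
  have hC1 : ξ t₀ + δ/2 ≤ C := by rw [hCdef]; nlinarith
  have hC2 : T * ξ T ≤ C * η := by
    have h1 : (T * ξ T)/η * η = T * ξ T := by field_simp
    rw [hCdef]; nlinarith
  have hCA : A < C * t₀ := by
    rw [hAdef, hCdef]; nlinarith [mul_nonneg hdivnn ht₀pos.le]
  -- boundedness of the sup family
  have hbdd : ∀ t : ℝ, BddAbove (Set.range fun s : Set.Icc (0:ℝ) t₀ =>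
      ξ s.1 * ((1+ε)*t - ε*s.1)) := by
    intro t
    refine ⟨ξ t₀ * ((1+ε)*|t|), ?_⟩
    rintro x ⟨s, rfl⟩
    have hsmem : s.1 ∈ Set.Icc (0:ℝ) T := ⟨s.2.1, s.2.2.trans ht₀T⟩
    have h1 : 0 ≤ ξ s.1 := hξnn s.1 hsmem
    have h2 : ξ s.1 ≤ ξ t₀ := hmono hsmem ht₀mem s.2.2
    have h3 : (1+ε)*t - ε*s.1 ≤ (1+ε)*|t| := by
      nlinarith [le_abs_self t, mul_nonneg hεpos.le s.2.1]
    calc ξ s.1 * ((1+ε)*t - ε*s.1) ≤ ξ s.1 * ((1+ε)*|t|) :=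
          mul_le_mul_of_nonneg_left h3 h1
      _ ≤ ξ t₀ * ((1+ε)*|t|) := mul_le_mul_of_nonneg_right h2 (by positivity)
  -- basic inequalities for nazh
  have hSleh : ∀ t, nazS ξ t₀ ε t ≤ nazh ξ t₀ ε A C t := fun t => le_max_left _ _
  have hLleh : ∀ t, A + C*(t - t₀) ≤ nazh ξ t₀ ε A C t :=
    fun t => (le_max_left _ _).trans (le_max_right _ _)
  have hhnn : ∀ t, 0 ≤ nazh ξ t₀ ε A C t :=
    fun t => (le_max_right _ _).trans (le_max_right _ _)
  have hS0 : nazS ξ t₀ ε 0 ≤ 0 := by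
    refine ciSup_le fun s => ?_
    have h1 : 0 ≤ ξ s.1 := hξnn s.1 ⟨s.2.1, s.2.2.trans ht₀T⟩
    nlinarith [mul_nonneg (mul_nonneg hεpos.le s.2.1) h1]
  have hh0 : nazh ξ t₀ ε A C 0 = 0 := by
    have hinner : max (A + C*((0:ℝ) - t₀)) 0 = 0 :=
      max_eq_right (by nlinarith)
    rw [nazh, hinner, max_eq_right hS0]
  -- g ≤ h on [0, T]
  have hge : ∀ t ∈ Set.Icc (0:ℝ) T, t * ξ t ≤ nazh ξ t₀ ε A C t := by
    intro t ht
    rcases le_or_gt t t₀ with htle | htgt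
    · have h1 := le_ciSup (hbdd t) (⟨t, ht.1, htle⟩ : Set.Icc (0:ℝ) t₀)
      refine le_trans ?_ (hSleh t)
      rw [nazS]
      calc t * ξ t = ξ t * ((1+ε)*t - ε*t) := by ring
        _ ≤ _ := h1
    · refine le_trans ?_ (hLleh t)
      rcases lt_or_ge t (t₀ + η) with hcase | hcase
      · have hξt : ξ t ≤ ξ t₀ + δ/2 := hη t ht (by rw [abs_lt]; constructor <;> linarith)
        have h1 : 0 ≤ (C - (ξ t₀ + δ/2)) * (t - t₀) :=
          mul_nonneg (by linarith) (by linarith)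
        nlinarith [hAdef, mul_le_mul_of_nonneg_left hξt ht.1]
      · have h1 : t * ξ t ≤ T * ξ T :=
          mul_le_mul ht.2 (hmono ht hTmem ht.2) (hξnn t ht) hT.le
        have h2 : C * η ≤ C * (t - t₀) :=
          mul_le_mul_of_nonneg_left (by linarith) hCpos.le
        have hAnn : 0 ≤ A := by rw [hAdef]; positivity
        nlinarith
  -- value at t₀
  have hht₀ : nazh ξ t₀ ε A C t₀ ≤ t₀ * (ξ t₀ + δ/2) := by
    rw [nazh]
    refine max_le ?_ (max_le ?_ ?_)
    · refine ciSup_le fun s => ?_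
      have hsmem : s.1 ∈ Set.Icc (0:ℝ) T := ⟨s.2.1, s.2.2.trans ht₀T⟩
      have h1 : 0 ≤ ξ s.1 := hξnn s.1 hsmem
      have h2 : ξ s.1 ≤ ξ t₀ := hmono hsmem ht₀mem s.2.2
      have h3 : (1+ε)*t₀ - ε*s.1 ≤ (1+ε)*t₀ := by
        nlinarith [mul_nonneg hεpos.le s.2.1]
      have h4 : 0 ≤ (1+ε)*t₀ - ε*s.1 := by nlinarith [s.2.2, ht₀pos]
      calc ξ s.1 * ((1+ε)*t₀ - ε*s.1) ≤ ξ t₀ * ((1+ε)*t₀) :=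
            mul_le_mul h2 h3 h4 hω₀nn
        _ ≤ t₀ * (ξ t₀ + δ/2) := by nlinarith [mul_le_mul_of_nonneg_right hεω₀ ht₀pos.le]
    · rw [hAdef]; simp
    · positivity
  -- convexity of nazh
  have hSconv : ConvexOn ℝ Set.univ (nazS ξ t₀ ε) := by
    refine ⟨convex_univ, fun x _ y _ a b ha hb hab => ?_⟩
    simp only [smul_eq_mul, nazS]
    refine ciSup_le fun s => ?_
    have hx := le_ciSup (hbdd x) s
    have hy := le_ciSup (hbdd y) s
    calc ξ s.1 * ((1+ε)*(a*x+b*y) - ε*s.1)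
        = a*(ξ s.1 * ((1+ε)*x - ε*s.1)) + b*(ξ s.1 * ((1+ε)*y - ε*s.1)) := by
          linear_combination (ξ s.1 * ε * s.1) * hab
      _ ≤ a * nazS ξ t₀ ε x + b * nazS ξ t₀ ε y :=
          add_le_add (mul_le_mul_of_nonneg_left hx ha) (mul_le_mul_of_nonneg_left hy hb)
  have hhconv : ConvexOn ℝ Set.univ (nazh ξ t₀ ε A C) :=
    convexOn_max13 hSconv (convexOn_max13 (convexOn_affine13 A C t₀)
      (convexOn_const 0 convex_univ))
  have hhcont : Continuous (nazh ξ t₀ ε A C) := by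
    rw [← continuousOn_univ]
    exact hhconv.continuousOn isOpen_univ
  -- slope monotonicity
  have hslope : ∀ x y : ℝ, 0 < x → x ≤ y →
      nazh ξ t₀ ε A C x / x ≤ nazh ξ t₀ ε A C y / y := by
    intro x y hx hxy
    have hy : 0 < y := hx.trans_le hxy
    have hb0 : 0 ≤ x/y := by positivity
    have hb1 : x/y ≤ 1 := by rw [div_le_one hy]; exact hxy
    have hcomb := hhconv.2 (Set.mem_univ (0:ℝ)) (Set.mem_univ y)
      (show (0:ℝ) ≤ 1 - x/y by linarith) hb0 (show 1 - x/y + x/y = 1 by ring)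
    simp only [smul_eq_mul, mul_zero, zero_add] at hcomb
    rw [div_mul_cancel₀ _ hy.ne'] at hcomb
    rw [hh0, mul_zero, zero_add] at hcomb
    rw [div_le_div_iff₀ hx hy]
    have h1 : x / y * nazh ξ t₀ ε A C y * y = nazh ξ t₀ ε A C y * x := by
      field_simp
    nlinarith [hcomb]
  -- bound near zero
  have hbound : ∀ t ∈ Set.Icc (0:ℝ) T, t < (C*t₀ - A)/C →
      nazh ξ t₀ ε A C t / t ≤ (1+ε) * ξ (min ((1+ε)*t/ε) t₀) := by
    intro t ht htτ
    have hmmem : min ((1+ε)*t/ε) t₀ ∈ Set.Icc (0:ℝ) T :=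
      ⟨le_min (div_nonneg (mul_nonneg (by linarith) ht.1) hεpos.le) ht₀pos.le,
        (min_le_right _ _).trans ht₀T⟩
    have hmnn := hξnn _ hmmem
    rcases eq_or_lt_of_le ht.1 with h0 | h0
    · rw [← h0, div_zero]
      exact mul_nonneg (by linarith) (by rw [← h0] at hmnn; exact hmnn)
    · have hLneg : A + C*(t - t₀) < 0 := by
        have := (lt_div_iff₀ hCpos).mp htτ
        nlinarith
      have hSb : nazS ξ t₀ ε t ≤ ξ (min ((1+ε)*t/ε) t₀) * ((1+ε)*t) := by
        refine ciSup_le fun s => ?_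
        have hsmem : s.1 ∈ Set.Icc (0:ℝ) T := ⟨s.2.1, s.2.2.trans ht₀T⟩
        have hξsnn : 0 ≤ ξ s.1 := hξnn s.1 hsmem
        rcases le_or_gt ((1+ε)*t) (ε*s.1) with hc | hc
        · have h1 : ξ s.1 * ((1+ε)*t - ε*s.1) ≤ 0 :=
            mul_nonpos_of_nonneg_of_nonpos hξsnn (by linarith)
          exact h1.trans (mul_nonneg hmnn (mul_nonneg (by linarith) h0.le))
        · have hsle : s.1 ≤ min ((1+ε)*t/ε) t₀ :=
            le_min ((le_div_iff₀ hεpos).mpr (by linarith)) s.2.2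
          have hξle : ξ s.1 ≤ ξ (min ((1+ε)*t/ε) t₀) := hmono hsmem hmmem hsle
          have hbr1 : (1+ε)*t - ε*s.1 ≤ (1+ε)*t := by
            nlinarith [mul_nonneg hεpos.le s.2.1]
          exact mul_le_mul hξle hbr1 (by linarith) hmnn
      have hhb : nazh ξ t₀ ε A C t ≤ ξ (min ((1+ε)*t/ε) t₀) * ((1+ε)*t) := by
        rw [nazh]
        have hrnn : 0 ≤ ξ (min ((1+ε)*t/ε) t₀) * ((1+ε)*t) :=
          mul_nonneg hmnn (mul_nonneg (by linarith) h0.le)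
        exact max_le hSb (max_le (by linarith) hrnn)
      rw [div_le_iff₀ h0]
      calc nazh ξ t₀ ε A C t ≤ ξ (min ((1+ε)*t/ε) t₀) * ((1+ε)*t) := hhb
        _ = (1+ε) * ξ (min ((1+ε)*t/ε) t₀) * t := by ring
  -- continuity
  have hcont' : ContinuousOn (fun t => nazh ξ t₀ ε A C t / t) (Set.Icc 0 T) := by
    intro x hx
    rcases eq_or_lt_of_le hx.1 with hx0 | hxpos
    · subst hx0
      have hτpos : 0 < (C*t₀ - A)/C := div_pos (by linarith) hCpos
      have hmapsto : Filter.Tendsto (fun t => min ((1+ε)*t/ε) t₀)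
          (nhdsWithin 0 (Set.Icc 0 T)) (nhdsWithin 0 (Set.Icc 0 T)) := by
        apply tendsto_nhdsWithin_of_tendsto_nhds_of_eventually_within
        · have hmc : Continuous fun t : ℝ => min ((1+ε)*t/ε) t₀ :=
            ((continuous_const.mul continuous_id).div_const ε).min continuous_const
          have h2 := hmc.tendsto 0
          simp only [mul_zero, zero_div, min_eq_left ht₀pos.le] at h2
          exact h2.mono_left nhdsWithin_le_nhds
        · filter_upwards [eventually_mem_nhdsWithin] with t ht
          exact ⟨le_min (div_nonneg (mul_nonneg (by linarith) ht.1) hεpos.le) ht₀pos.le,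
            (min_le_right _ _).trans ht₀T⟩
      have hξ0' : Filter.Tendsto ξ (nhdsWithin 0 (Set.Icc 0 T)) (nhds 0) := by
        have := hcont 0 h0T
        rwa [ContinuousWithinAt, hξ0] at this
      have htendB : Filter.Tendsto (fun t => (1+ε) * ξ (min ((1+ε)*t/ε) t₀))
          (nhdsWithin 0 (Set.Icc 0 T)) (nhds 0) := by
        have h3 := (hξ0'.comp hmapsto).const_mul (1+ε)
        simpa using h3
      have hev1 : ∀ᶠ t in nhdsWithin 0 (Set.Icc 0 T), 0 ≤ nazh ξ t₀ ε A C t / t := by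
        filter_upwards [eventually_mem_nhdsWithin] with t ht
        exact div_nonneg (hhnn t) ht.1
      have hev2 : ∀ᶠ t in nhdsWithin 0 (Set.Icc 0 T),
          nazh ξ t₀ ε A C t / t ≤ (1+ε) * ξ (min ((1+ε)*t/ε) t₀) := by
        filter_upwards [eventually_mem_nhdsWithin,
          (eventually_lt_nhds hτpos).filter_mono nhdsWithin_le_nhds] with t ht htτ
        exact hbound t ht htτ
      have hsq := tendsto_of_tendsto_of_tendsto_of_le_of_le' tendsto_const_nhds htendB hev1 hev2
      have h00 : nazh ξ t₀ ε A C 0 / (0:ℝ) = 0 := div_zero _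
      rw [ContinuousWithinAt, h00]
      exact hsq
    · exact ((hhcont.continuousAt).div continuousAt_id hxpos.ne').continuousWithinAt
  refine ⟨fun t => nazh ξ t₀ ε A C t / t, hcont', ?_, ?_, ?_, ?_, ?_⟩
  · -- monotone
    intro x hx y hy hxy
    rcases eq_or_lt_of_le hx.1 with hx0 | hxpos
    · subst hx0
      simp only [div_zero]
      exact div_nonneg (hhnn y) hy.1
    · exact hslope x y hxpos hxy
  · -- majorizes ξ
    intro t ht
    rcases eq_or_lt_of_le ht.1 with ht0 | htpos
    · subst ht0; simp [hξ0]
    · rw [le_div_iff₀ htpos]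
      calc ξ t * t = t * ξ t := mul_comm _ _
        _ ≤ _ := hge t ht
  · simp
  · rw [div_le_iff₀ ht₀pos]
    nlinarith [hht₀]
  · -- convexity
    have key : ∀ t ∈ Set.Icc (0:ℝ) T, t * (nazh ξ t₀ ε A C t / t) = nazh ξ t₀ ε A C t := by
      intro t ht
      rcases eq_or_lt_of_le ht.1 with ht0 | htpos
      · subst ht0; simp [hh0]
      · rw [mul_comm, div_mul_cancel₀ _ htpos.ne']
    refine ⟨convex_Icc _ _, fun x hx y hy a b ha hb hab => ?_⟩
    have hmem : a • x + b • y ∈ Set.Icc (0:ℝ) T := (convex_Icc (0:ℝ) T) hx hy ha hb hab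
    simp only [smul_eq_mul] at hmem ⊢
    rw [key _ hmem, key _ hx, key _ hy]
    have h5 := hhconv.2 (Set.mem_univ x) (Set.mem_univ y) ha hb hab
    simpa using h5
end

section
/- Let ψ be a monotone function on [a,b] with ψ ∈ L²(a,b). Then the function F(t) = t·∫_a^{a+t} ψ² − (∫_a^{a+t} ψ)² is convex on [0, b−a]. Similarly, t ↦ t·∫_{b−t}^{b} ψ² − (∫_{b−t}^{b} ψ)² is convex on [0, b−a]. -/
set_option linter.unusedVariables false

open MeasureTheory Set intervalIntegral

lemma tri_swap {t : ℝ} (ht : 0 ≤ t) {g h : ℝ → ℝ}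
    (hgi : IntegrableOn g (Ioc 0 t)) (hhi : IntegrableOn h (Ioc 0 t)) :
    (∫ s in (0:ℝ)..t, h s * ∫ u in (0:ℝ)..s, g u)
      = (∫ u in (0:ℝ)..t, g u) * (∫ s in (0:ℝ)..t, h s)
        - ∫ u in (0:ℝ)..t, g u * ∫ s in (0:ℝ)..u, h s := by
  set T : Set ℝ := Ioc (0:ℝ) t with hTdef
  have hT : MeasurableSet T := measurableSet_Ioc
  set μ : Measure ℝ := volume.restrict T with hμdef
  set F : ℝ → ℝ → ℝ := fun s u => if u ≤ s then h s * g u else 0 with hF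
  -- integrability of uncurried F on product
  have hGint : Integrable (fun p : ℝ × ℝ => h p.1 * g p.2) (μ.prod μ) :=
    hhi.mul_prod hgi
  have hFint : Integrable (Function.uncurry F) (μ.prod μ) := by
    have : Function.uncurry F
        = {p : ℝ × ℝ | p.2 ≤ p.1}.indicator (fun p => h p.1 * g p.2) := by
      funext p
      simp only [Function.uncurry, hF, Set.indicator_apply, Set.mem_setOf_eq]
    rw [this]
    exact hGint.indicator (measurableSet_le measurable_snd measurable_fst)
  -- step 1 : LHS as iterated integral of F
  have step1 : (∫ s in (0:ℝ)..t, h s * ∫ u in (0:ℝ)..s, g u)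
      = ∫ s, (∫ u, F s u ∂μ) ∂μ := by
    rw [integral_of_le ht]
    refine setIntegral_congr_fun hT fun s hs => ?_
    have hinner : (∫ u in (0:ℝ)..s, g u) = ∫ u, (Iic s).indicator g u ∂μ := by
      rw [integral_of_le hs.1.le, hμdef, setIntegral_indicator measurableSet_Iic]
      congr 1
      rw [hTdef, Ioc_inter_Iic, min_eq_right hs.2]
    rw [hinner, ← MeasureTheory.integral_const_mul]
    refine integral_congr_ae (Filter.Eventually.of_forall fun u => ?_)
    simp only [hF, Set.indicator_apply, mem_Iic]
    split_ifs <;> simp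
  -- step 2 : swap
  have step2 : ∫ s, (∫ u, F s u ∂μ) ∂μ = ∫ u, (∫ s, F s u ∂μ) ∂μ :=
    integral_integral_swap hFint
  -- integrability of h on subintervals
  have hhI : IntervalIntegrable h volume 0 t :=
    (intervalIntegrable_iff_integrableOn_Ioc_of_le ht).2 hhi
  have hhIu : ∀ u ∈ T, IntervalIntegrable h volume 0 u := fun u hu =>
    (intervalIntegrable_iff_integrableOn_Ioc_of_le hu.1.le).2
      (hhi.mono_set (Ioc_subset_Ioc_right hu.2))
  -- step 3 : inner integral computation
  have step3 : ∀ u ∈ T, (∫ s, F s u ∂μ)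
      = g u * ((∫ s in (0:ℝ)..t, h s) - ∫ s in (0:ℝ)..u, h s) := by
    intro u hu
    have e1 : (∫ s, F s u ∂μ) = ∫ s in T ∩ Ici u, h s * g u ∂volume := by
      rw [hμdef, ← setIntegral_indicator measurableSet_Ici]
      refine setIntegral_congr_fun hT fun s _ => ?_
      simp only [hF, Set.indicator_apply, mem_Ici]
    have e2 : T ∩ Ici u = Icc u t := by
      ext x
      simp only [hTdef, mem_inter_iff, mem_Ioc, mem_Ici, mem_Icc]
      constructor
      · rintro ⟨⟨_, h2⟩, h3⟩; exact ⟨h3, h2⟩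
      · rintro ⟨h1, h2⟩; exact ⟨⟨lt_of_lt_of_le hu.1 h1, h2⟩, h1⟩
    rw [e1, e2, MeasureTheory.integral_mul_const, integral_Icc_eq_integral_Ioc,
      ← integral_of_le hu.2, ← integral_interval_sub_left hhI (hhIu u hu)]
    ring
  -- now assemble
  set Φh : ℝ → ℝ := fun u => ∫ s in (0:ℝ)..u, h s with hΦh
  have Φcont : ContinuousOn Φh (uIcc (0:ℝ) t) :=
    continuousOn_primitive_interval' hhI left_mem_uIcc
  have Φmeas : AEStronglyMeasurable Φh μ := by
    refine ContinuousOn.aestronglyMeasurable (Φcont.mono ?_) hT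
    rw [uIcc_of_le ht]
    exact fun x hx => Ioc_subset_Icc_self hx
  have Φbdd : ∀ᵐ u ∂μ, ‖Φh u‖ ≤ ∫ s in T, ‖h s‖ ∂volume := by
    rw [hμdef]
    filter_upwards [ae_restrict_mem hT] with u hu
    rw [hΦh]
    simp only
    rw [integral_of_le hu.1.le]
    refine (MeasureTheory.norm_integral_le_integral_norm _).trans ?_
    refine setIntegral_mono_set hhi.norm
      (Filter.Eventually.of_forall fun x => norm_nonneg _) ?_
    exact Filter.Eventually.of_forall fun x hx => Ioc_subset_Ioc_right hu.2 hx
  have hbint : Integrable (fun u => g u * Φh u) μ := by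
    have := Integrable.bdd_mul (c := ∫ s in T, ‖h s‖ ∂volume) hgi Φmeas Φbdd
    simpa [mul_comm] using this
  have haint : Integrable (fun u => g u * ∫ s in (0:ℝ)..t, h s) μ :=
    hgi.mul_const _
  rw [step1, step2]
  calc ∫ u, (∫ s, F s u ∂μ) ∂μ
      = ∫ u, (g u * (∫ s in (0:ℝ)..t, h s) - g u * Φh u) ∂μ := by
        rw [hμdef]
        refine setIntegral_congr_fun hT fun u hu => ?_
        rw [step3 u hu]; ring
    _ = (∫ u, g u * (∫ s in (0:ℝ)..t, h s) ∂μ) - ∫ u, g u * Φh u ∂μ :=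
        integral_sub haint hbint
    _ = ((∫ u in (0:ℝ)..t, g u) * ∫ s in (0:ℝ)..t, h s)
          - ∫ u in (0:ℝ)..t, g u * ∫ s in (0:ℝ)..u, h s := by
        rw [MeasureTheory.integral_mul_const, hμdef, ← integral_of_le ht, ← integral_of_le ht]

lemma aux_convex {c : ℝ} (hc : 0 ≤ c) {f : ℝ → ℝ}
    (hmono : Monotone f ∨ Antitone f) :
    ConvexOn ℝ (Icc 0 c)
      (fun t => t * (∫ u in (0:ℝ)..t, f u ^ 2) - (∫ u in (0:ℝ)..t, f u) ^ 2) := by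
  have hmf : Measurable f := by
    rcases hmono with hm | hm
    exacts [hm.measurable, hm.measurable]
  -- interval integrability of f and f² on every interval
  have hfi : ∀ p q : ℝ, IntervalIntegrable f volume p q := by
    intro p q
    rcases hmono with hm | hm
    · exact (hm.monotoneOn _).intervalIntegrable
    · exact (hm.antitoneOn _).intervalIntegrable
  have hbound : ∀ p q : ℝ, ∀ u ∈ uIcc p q, |f u| ≤ max |f (min p q)| |f (max p q)| := by
    intro p q u hu
    rw [uIcc] at hu
    rcases hmono with hm | hm
    · exact abs_le_max_abs_abs (hm hu.1) (hm hu.2)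
    · exact (abs_le_max_abs_abs (hm hu.2) (hm hu.1)).trans (le_of_eq (max_comm _ _))
  have hf2i : ∀ p q : ℝ, IntervalIntegrable (fun u => f u ^ 2) volume p q := by
    intro p q
    rw [intervalIntegrable_iff]
    have : Integrable (fun u => f u * f u) (volume.restrict (Set.uIoc p q)) := by
      refine Integrable.bdd_mul (c := max |f (min p q)| |f (max p q)|)
        ((intervalIntegrable_iff.1 (hfi p q)))
        (hmf.aestronglyMeasurable.restrict) ?_
      filter_upwards [ae_restrict_mem measurableSet_uIoc] with u hu
      exact hbound p q u (uIoc_subset_uIcc hu)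
    simpa [sq, IntegrableOn] using this
  -- the auxiliary function φ
  set φ : ℝ → ℝ := fun s => ∫ u in (0:ℝ)..s, (f u - f s) ^ 2 with hφ
  have hsqi : ∀ (k : ℝ) (p q : ℝ),
      IntervalIntegrable (fun u => (f u - k) ^ 2) volume p q := by
    intro k p q
    have : (fun u => (f u - k) ^ 2)
        = fun u => f u ^ 2 - (2 * k) * f u + k ^ 2 := by funext u; ring
    rw [this]
    exact ((hf2i p q).sub ((hfi p q).const_mul _)).add intervalIntegrable_const
  have hφexp : ∀ s : ℝ, φ s = (∫ u in (0:ℝ)..s, f u ^ 2)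
      - 2 * f s * (∫ u in (0:ℝ)..s, f u) + s * f s ^ 2 := by
    intro s
    rw [hφ]
    simp only
    have : (fun u => (f u - f s) ^ 2)
        = fun u => f u ^ 2 - (2 * f s) * f u + f s ^ 2 := by funext u; ring
    rw [this, integral_add (((hf2i 0 s).sub ((hfi 0 s).const_mul _)))
      intervalIntegrable_const,
      integral_sub (hf2i 0 s) ((hfi 0 s).const_mul _), intervalIntegral.integral_const_mul,
      intervalIntegral.integral_const]
    simp only [smul_eq_mul, sub_zero]
  -- φ is monotone on [0, c]
  have hφmono : MonotoneOn φ (Icc 0 c) := by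
    intro s₁ hs₁ s₂ hs₂ h12
    have hsplit : φ s₂ = (∫ u in (0:ℝ)..s₁, (f u - f s₂) ^ 2)
        + ∫ u in s₁..s₂, (f u - f s₂) ^ 2 :=
      (integral_add_adjacent_intervals (hsqi _ 0 s₁) (hsqi _ s₁ s₂)).symm
    have h1 : (∫ u in (0:ℝ)..s₁, (f u - f s₁) ^ 2)
        ≤ ∫ u in (0:ℝ)..s₁, (f u - f s₂) ^ 2 := by
      refine integral_mono_on hs₁.1 (hsqi _ 0 s₁) (hsqi _ 0 s₁) fun u hu => ?_
      rcases hmono with hm | hm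
      · have h1 := hm (hu.2.trans h12)
        have h2 := hm h12
        nlinarith [hm hu.2]
      · have h1 := hm (hu.2.trans h12)
        have h2 := hm h12
        nlinarith [hm hu.2]
    have h2 : 0 ≤ ∫ u in s₁..s₂, (f u - f s₂) ^ 2 :=
      integral_nonneg h12 fun u _ => sq_nonneg _
    calc φ s₁ ≤ ∫ u in (0:ℝ)..s₁, (f u - f s₂) ^ 2 := h1
      _ ≤ φ s₂ := by rw [hsplit]; linarith
  -- key identity : F t = ∫_0^t φ  for t ≥ 0
  have hkey : ∀ t : ℝ, 0 ≤ t →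
      t * (∫ u in (0:ℝ)..t, f u ^ 2) - (∫ u in (0:ℝ)..t, f u) ^ 2
        = ∫ s in (0:ℝ)..t, φ s := by
    intro t ht
    have hgi2 : IntegrableOn (fun u => f u ^ 2) (Ioc 0 t) :=
      (intervalIntegrable_iff_integrableOn_Ioc_of_le ht).1 (hf2i 0 t)
    have hgi1 : IntegrableOn f (Ioc 0 t) :=
      (intervalIntegrable_iff_integrableOn_Ioc_of_le ht).1 (hfi 0 t)
    have h1i : IntegrableOn (fun _ : ℝ => (1:ℝ)) (Ioc 0 t) :=
      integrableOn_const (by simp)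
    -- T1 : with g = f², h = 1
    have T1 := tri_swap ht hgi2 h1i
    -- T2 : with g = h = f
    have T2 := tri_swap ht hgi1 hgi1
    simp only [one_mul, integral_one] at T1
    -- continuity of primitives
    have hAcont : ContinuousOn (fun s => ∫ u in (0:ℝ)..s, f u ^ 2) (uIcc 0 t) :=
      continuousOn_primitive_interval' (hf2i 0 t) left_mem_uIcc
    have hΦcont : ContinuousOn (fun s => ∫ u in (0:ℝ)..s, f u) (uIcc 0 t) :=
      continuousOn_primitive_interval' (hfi 0 t) left_mem_uIcc
    have hAint : IntervalIntegrable (fun s => ∫ u in (0:ℝ)..s, f u ^ 2) volume 0 t :=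
      hAcont.intervalIntegrable
    have hfΦint : IntervalIntegrable (fun s => f s * ∫ u in (0:ℝ)..s, f u) volume 0 t :=
      (hfi 0 t).mul_continuousOn hΦcont
    have hsf2int : IntervalIntegrable (fun s => s * f s ^ 2) volume 0 t :=
      (hf2i 0 t).continuousOn_mul continuousOn_id
    have e1 : (∫ s in (0:ℝ)..t, φ s)
        = (∫ s in (0:ℝ)..t, ((∫ u in (0:ℝ)..s, f u ^ 2)
            - 2 * (f s * ∫ u in (0:ℝ)..s, f u) + s * f s ^ 2)) := by
      refine integral_congr fun s _ => ?_
      rw [hφexp s]; ring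
    rw [e1, integral_add ((hAint.sub (hfΦint.const_mul 2))) hsf2int,
      integral_sub hAint (hfΦint.const_mul 2), intervalIntegral.integral_const_mul]
    simp only [sub_zero] at T1
    have e2 : (∫ u in (0:ℝ)..t, f u ^ 2 * u) = ∫ s in (0:ℝ)..t, s * f s ^ 2 := by
      refine integral_congr fun s _ => ?_
      ring
    linear_combination -T1 + T2 + e2
  -- conclude convexity via slopes
  refine convexOn_of_slope_mono_adjacent (convex_Icc 0 c) ?_
  intro x y z hx hz hxy hyz
  have hy : y ∈ Icc 0 c := ⟨hx.1.trans hxy.le, hyz.le.trans hz.2⟩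
  have hφint : ∀ p q : ℝ, p ∈ Icc 0 c → q ∈ Icc 0 c →
      IntervalIntegrable φ volume p q := by
    intro p q hp hq
    have : uIcc p q ⊆ Icc 0 c := uIcc_subset_Icc hp hq
    exact (hφmono.mono this).intervalIntegrable
  have hx' : x ∈ Icc 0 c := hx
  have h0 : (0:ℝ) ∈ Icc 0 c := ⟨le_refl _, hc⟩
  have d1 : (fun t => t * (∫ u in (0:ℝ)..t, f u ^ 2) - (∫ u in (0:ℝ)..t, f u) ^ 2) y
      - (fun t => t * (∫ u in (0:ℝ)..t, f u ^ 2) - (∫ u in (0:ℝ)..t, f u) ^ 2) x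
      = ∫ s in x..y, φ s := by
    simp only
    rw [hkey y hy.1, hkey x hx.1]
    exact integral_interval_sub_left (hφint 0 y h0 hy) (hφint 0 x h0 hx)
  have d2 : (fun t => t * (∫ u in (0:ℝ)..t, f u ^ 2) - (∫ u in (0:ℝ)..t, f u) ^ 2) z
      - (fun t => t * (∫ u in (0:ℝ)..t, f u ^ 2) - (∫ u in (0:ℝ)..t, f u) ^ 2) y
      = ∫ s in y..z, φ s := by
    simp only
    rw [hkey z hz.1, hkey y hy.1]
    exact integral_interval_sub_left (hφint 0 z h0 hz) (hφint 0 y h0 hy)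
  have b1 : (∫ s in x..y, φ s) ≤ (y - x) * φ y := by
    have := integral_mono_on hxy.le (hφint x y hx hy) intervalIntegrable_const
      (fun u hu => hφmono ⟨hx.1.trans hu.1, hu.2.trans hy.2⟩ hy hu.2)
    simpa using this
  have b2 : (z - y) * φ y ≤ ∫ s in y..z, φ s := by
    have := integral_mono_on hyz.le intervalIntegrable_const (hφint y z hy hz)
      (fun u hu => hφmono hy ⟨hy.1.trans hu.1, hu.2.trans hz.2⟩ hu.1)
    simpa using this
  have k1 := d1.le.trans b1
  have k2 := b2.trans d2.ge
  simp only at k1 k2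
  rw [div_le_div_iff₀ (by linarith) (by linarith)]
  nlinarith [mul_le_mul_of_nonneg_right k1 (le_of_lt (sub_pos.2 hyz)),
    mul_le_mul_of_nonneg_right k2 (le_of_lt (sub_pos.2 hxy))]

lemma convexOn_congr_on {s : Set ℝ} {f g : ℝ → ℝ} (hg : ConvexOn ℝ s g)
    (h : ∀ x ∈ s, f x = g x) : ConvexOn ℝ s f :=
  ⟨hg.1, fun x hx y hy a b ha hb hab => by
    rw [h _ hx, h _ hy, h _ (hg.1 hx hy ha hb hab)]
    exact hg.2 hx hy ha hb hab⟩

/-- If `ψ` is monotone on `[a,b]` and square integrable, then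
`F(t) = t·∫_a^{a+t} ψ² − (∫_a^{a+t} ψ)²` is convex on `[0, b−a]`, and likewise
`t ↦ t·∫_{b−t}^b ψ² − (∫_{b−t}^b ψ)²` is convex on `[0, b−a]`. -/
theorem statement14 (a b : ℝ) (hab : a < b) (ψ : ℝ → ℝ)
    (hmono : MonotoneOn ψ (Set.Icc a b) ∨ AntitoneOn ψ (Set.Icc a b))
    (hL2 : MemLp ψ 2 (volume.restrict (Set.Icc a b))) :
    ConvexOn ℝ (Set.Icc 0 (b - a))
      (fun t => t * (∫ τ in a..(a + t), ψ τ ^ 2) - (∫ τ in a..(a + t), ψ τ) ^ 2) ∧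
    ConvexOn ℝ (Set.Icc 0 (b - a))
      (fun t => t * (∫ τ in (b - t)..b, ψ τ ^ 2) - (∫ τ in (b - t)..b, ψ τ) ^ 2) := by
  set c := b - a with hcdef
  have hc : (0:ℝ) ≤ c := by simp [hcdef]; linarith
  set cl : ℝ → ℝ := fun u => max 0 (min c u) with hcl
  have hclmono : Monotone cl := monotone_const.max (monotone_const.min monotone_id)
  have hclmem : ∀ u : ℝ, cl u ∈ Icc 0 c := fun u =>
    ⟨le_max_left _ _, max_le hc (min_le_left _ _)⟩
  have hclid : ∀ u : ℝ, 0 ≤ u → u ≤ c → cl u = u := fun u h1 h2 => by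
    rw [hcl]; simp only; rw [min_eq_right h2, max_eq_right h1]
  constructor
  · -- first function
    set f₁ : ℝ → ℝ := fun u => ψ (a + cl u) with hf₁
    have hmem₁ : ∀ u : ℝ, a + cl u ∈ Icc a b := fun u =>
      ⟨by linarith [(hclmem u).1], by have := (hclmem u).2; simp [hcdef] at this ⊢; linarith⟩
    have hmono₁ : Monotone f₁ ∨ Antitone f₁ := by
      rcases hmono with hm | hm
      · exact Or.inl fun u v huv =>
          hm (hmem₁ u) (hmem₁ v) (by linarith [hclmono huv])
      · exact Or.inr fun u v huv =>
          hm (hmem₁ u) (hmem₁ v) (by linarith [hclmono huv])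
    refine convexOn_congr_on (aux_convex hc hmono₁) fun t ht => ?_
    have e1 : (∫ u in (0:ℝ)..t, f₁ u) = ∫ τ in a..(a + t), ψ τ := by
      calc (∫ u in (0:ℝ)..t, f₁ u) = ∫ u in (0:ℝ)..t, ψ (a + u) := by
            refine integral_congr fun u hu => ?_
            rw [uIcc_of_le ht.1] at hu
            rw [hf₁]; simp only; rw [hclid u hu.1 (hu.2.trans ht.2)]
        _ = ∫ τ in a..(a + t), ψ τ := by
            rw [integral_comp_add_left ψ a, add_zero]
    have e2 : (∫ u in (0:ℝ)..t, f₁ u ^ 2) = ∫ τ in a..(a + t), ψ τ ^ 2 := by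
      calc (∫ u in (0:ℝ)..t, f₁ u ^ 2)
          = ∫ u in (0:ℝ)..t, (fun τ => ψ τ ^ 2) (a + u) := by
            refine integral_congr fun u hu => ?_
            rw [uIcc_of_le ht.1] at hu
            rw [hf₁]; simp only; rw [hclid u hu.1 (hu.2.trans ht.2)]
        _ = ∫ τ in a..(a + t), ψ τ ^ 2 := by
            rw [integral_comp_add_left (fun τ => ψ τ ^ 2) a, add_zero]
    rw [e1, e2]
  · -- second function
    set f₂ : ℝ → ℝ := fun u => ψ (b - cl u) with hf₂
    have hmem₂ : ∀ u : ℝ, b - cl u ∈ Icc a b := fun u =>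
      ⟨by have := (hclmem u).2; simp [hcdef] at this ⊢; linarith,
       by linarith [(hclmem u).1]⟩
    have hmono₂ : Monotone f₂ ∨ Antitone f₂ := by
      rcases hmono with hm | hm
      · exact Or.inr fun u v huv =>
          hm (hmem₂ v) (hmem₂ u) (by linarith [hclmono huv])
      · exact Or.inl fun u v huv =>
          hm (hmem₂ v) (hmem₂ u) (by linarith [hclmono huv])
    refine convexOn_congr_on (aux_convex hc hmono₂) fun t ht => ?_
    have e1 : (∫ u in (0:ℝ)..t, f₂ u) = ∫ τ in (b - t)..b, ψ τ := by
      calc (∫ u in (0:ℝ)..t, f₂ u) = ∫ u in (0:ℝ)..t, ψ (b - u) := by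
            refine integral_congr fun u hu => ?_
            rw [uIcc_of_le ht.1] at hu
            rw [hf₂]; simp only; rw [hclid u hu.1 (hu.2.trans ht.2)]
        _ = ∫ τ in (b - t)..b, ψ τ := by
            rw [integral_comp_sub_left ψ b, sub_zero]
    have e2 : (∫ u in (0:ℝ)..t, f₂ u ^ 2) = ∫ τ in (b - t)..b, ψ τ ^ 2 := by
      calc (∫ u in (0:ℝ)..t, f₂ u ^ 2)
          = ∫ u in (0:ℝ)..t, (fun τ => ψ τ ^ 2) (b - u) := by
            refine integral_congr fun u hu => ?_
            rw [uIcc_of_le ht.1] at hu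
            rw [hf₂]; simp only; rw [hclid u hu.1 (hu.2.trans ht.2)]
        _ = ∫ τ in (b - t)..b, ψ τ ^ 2 := by
            rw [integral_comp_sub_left (fun τ => ψ τ ^ 2) b, sub_zero]
    rw [e1, e2]
end
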